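/- arXiv:1211.6536 — 8 statements merged into one kernel-verified Lean document; each statement's English description precedes it below -/
import Mathlib

section
/- Assume (m,d) has uniform subexponential growth. Then for every ε > 0 there exists C > 0 such that the cardinality of the ball satisfies #B_r(x) ≤ C·e^{ε r} for all x ∈ X and all r ≥ 0; in particular every distance ball is a finite set. -/
/-- If `(m, d)` has uniform subexponential growth, then for every `ε > 0`
there is `C > 0` with `#B_r(x) ≤ C · e^{ε r}` for all `x` and `r ≥ 0`; in particular every
distance ball is a finite set. -/
theorem stmt1 {X : Type*} [Countable X]
    (m : X → ℝ) (hm : ∀ x, 0 < m x)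
    (d : X → X → ℝ)
    (hd_nonneg : ∀ x y, 0 ≤ d x y)
    (hd_symm : ∀ x y, d x y = d y x)
    (hd_diag : ∀ x, d x x = 0)
    (hd_tri : ∀ x y z, d x z ≤ d x y + d y z)
    (husg : ∀ ε : ℝ, 0 < ε → ∃ C : ℝ, 0 < C ∧ ∀ (x : X) (r : ℝ), 0 ≤ r →
      (∑' y : {y : X // d x y ≤ r}, ENNReal.ofReal (m y)) ≤
        ENNReal.ofReal (C * Real.exp (ε * r) * m x)) :
    ∀ ε : ℝ, 0 < ε → ∃ C : ℝ, 0 < C ∧ ∀ (x : X) (r : ℝ), 0 ≤ r →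
      {y : X | d x y ≤ r}.encard ≤ ENNReal.ofReal (C * Real.exp (ε * r)) ∧
      {y : X | d x y ≤ r}.Finite := by
  intro ε hε
  obtain ⟨C, hC, hball⟩ := husg (ε / 2) (by linarith)
  refine ⟨C ^ 2, by positivity, ?_⟩
  intro x r hr
  set e : ℝ := Real.exp (ε / 2 * r) with he
  have hepos : 0 < e := Real.exp_pos _
  -- lower bound on m y for y in the ball
  have hlow : ∀ y, d x y ≤ r → m x ≤ C * e * m y := by
    intro y hy
    have h1 := hball y r hr
    have hx : d y x ≤ r := by rw [← hd_symm]; exact hy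
    have h2 : ENNReal.ofReal (m x) ≤ ∑' z : {z : X // d y z ≤ r}, ENNReal.ofReal (m z) :=
      ENNReal.le_tsum (⟨x, hx⟩ : {z : X // d y z ≤ r})
    have h3 := h2.trans h1
    rwa [ENNReal.ofReal_le_ofReal_iff
      (mul_nonneg (mul_nonneg hC.le (Real.exp_pos _).le) (hm y).le)] at h3
  have hup := hball x r hr
  set S : Set X := {y : X | d x y ≤ r} with hS
  have hCe : (0 : ℝ) < C * e := mul_pos hC hepos
  have hδ : (0 : ℝ) < m x / (C * e) := div_pos (hm x) hCe
  have hδle : ∀ y ∈ S, m x / (C * e) ≤ m y := by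
    intro y hy
    rw [div_le_iff₀ hCe]
    have := hlow y hy
    nlinarith
  -- finiteness
  have hne : (∑' y : S, ENNReal.ofReal (m y)) ≠ ⊤ :=
    ne_top_of_le_ne_top ENNReal.ofReal_ne_top hup
  have hfin : S.Finite := by
    have hf := ENNReal.finite_const_le_of_tsum_ne_top hne
      (ε := ENNReal.ofReal (m x / (C * e)))
      (by simp [ENNReal.ofReal_eq_zero, not_le, hδ])
    have huniv : {i : S | ENNReal.ofReal (m x / (C * e)) ≤ ENNReal.ofReal (m i)} =
        Set.univ := by
      ext i
      simp only [Set.mem_setOf_eq, Set.mem_univ, iff_true]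
      exact ENNReal.ofReal_le_ofReal (hδle i i.2)
    rw [huniv] at hf
    have : Finite S := Set.finite_univ_iff.mp hf
    exact Set.toFinite S
  refine ⟨?_, hfin⟩
  -- cardinality bound
  classical
  set F : Finset X := hfin.toFinset with hF
  have hmemF : ∀ y, y ∈ F ↔ y ∈ S := fun y => hfin.mem_toFinset
  have htsum : (∑' y : S, ENNReal.ofReal (m y)) = ∑ y ∈ F, ENNReal.ofReal (m y) := by
    rw [tsum_subtype S (fun y => ENNReal.ofReal (m y))]
    refine tsum_eq_sum ?_ |>.trans (Finset.sum_congr rfl ?_)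
    · intro y hy
      exact Set.indicator_of_notMem (by simpa [hmemF] using hy) _
    · intro y hy
      exact Set.indicator_of_mem ((hmemF y).mp hy) _
  have hup' : (∑' y : S, ENNReal.ofReal (m y)) ≤ ENNReal.ofReal (C * e * m x) := hup
  have hsum_real : ∑ y ∈ F, m y ≤ C * e * m x := by
    have h4 : ENNReal.ofReal (∑ y ∈ F, m y) ≤ ENNReal.ofReal (C * e * m x) := by
      rw [ENNReal.ofReal_sum_of_nonneg (fun y _ => (hm y).le)]
      exact htsum.symm.le.trans hup'
    rwa [ENNReal.ofReal_le_ofReal_iff (mul_nonneg hCe.le (hm x).le)] at h4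
  have hcard : (F.card : ℝ) * (m x / (C * e)) ≤ ∑ y ∈ F, m y := by
    have := Finset.card_nsmul_le_sum F (fun y => m y) (m x / (C * e))
      (fun y hy => hδle y ((hmemF y).mp hy))
    simpa [nsmul_eq_mul] using this
  have hcard2 : (F.card : ℝ) ≤ C ^ 2 * Real.exp (ε * r) := by
    have hee : e * e = Real.exp (ε * r) := by
      rw [he, ← Real.exp_add]; ring_nf
    have h1 : (F.card : ℝ) * m x ≤ C * e * (C * e * m x) := by
      have := hcard.trans hsum_real
      rw [div_eq_mul_inv] at this
      have hpos : (0 : ℝ) < C * e := by positivity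
      calc (F.card : ℝ) * m x = ((F.card : ℝ) * (m x * (C * e)⁻¹)) * (C * e) := by
            field_simp
        _ ≤ (C * e * m x) * (C * e) := by
            apply mul_le_mul_of_nonneg_right _ hpos.le
            simpa [mul_assoc] using this
        _ = C * e * (C * e * m x) := by ring
    have hmx := hm x
    have h2 : C * e * (C * e * m x) = C ^ 2 * Real.exp (ε * r) * m x := by
      rw [← hee]; ring
    rw [h2] at h1
    exact le_of_mul_le_mul_right h1 hmx
  have hencard : S.encard = (F.card : ℕ∞) := hfin.encard_eq_coe_toFinset_card
  rw [hencard]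
  calc ((F.card : ℕ∞) : ENNReal) = ENNReal.ofReal (F.card : ℝ) := by
        simp [ENNReal.ofReal_natCast]
    _ ≤ ENNReal.ofReal (C ^ 2 * Real.exp (ε * r)) := ENNReal.ofReal_le_ofReal hcard2
end

section
/- Assume (m,d) has uniform subexponential growth. Then for every ε > 0 there exists C > 0 such that ∑_{y∈X} e^{−ε d(x,y)} ≤ C for all x ∈ X. -/
/-- If `(m, d)` has uniform subexponential growth, then for every `ε > 0`
there is `C > 0` with `∑_{y ∈ X} e^{-ε d(x,y)} ≤ C` for all `x ∈ X`. -/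
theorem stmt2 {X : Type*} [Countable X]
    (m : X → ℝ) (hm : ∀ x, 0 < m x)
    (d : X → X → ℝ)
    (hd_nonneg : ∀ x y, 0 ≤ d x y)
    (hd_symm : ∀ x y, d x y = d y x)
    (hd_diag : ∀ x, d x x = 0)
    (hd_tri : ∀ x y z, d x z ≤ d x y + d y z)
    (husg : ∀ ε : ℝ, 0 < ε → ∃ C : ℝ, 0 < C ∧ ∀ (x : X) (r : ℝ), 0 ≤ r →
      (∑' y : {y : X // d x y ≤ r}, ENNReal.ofReal (m y)) ≤
        ENNReal.ofReal (C * Real.exp (ε * r) * m x)) :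
    ∀ ε : ℝ, 0 < ε → ∃ C : ℝ, 0 < C ∧ ∀ x : X,
      (∑' y : X, ENNReal.ofReal (Real.exp (-(ε * d x y)))) ≤ ENNReal.ofReal C := by
  intro ε hε
  obtain ⟨C₀, hC₀pos, hC₀⟩ := husg (ε / 4) (by positivity)
  -- constants
  set r : ℝ := Real.exp (-(ε / 2)) with hr_def
  have hr0 : 0 < r := Real.exp_pos _
  have hr1 : r < 1 := Real.exp_lt_one_iff.mpr (by linarith)
  set K : ℝ := C₀ ^ 2 * Real.exp (ε / 4) with hK_def
  have hKpos : 0 < K := by positivity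
  refine ⟨K * (1 - r)⁻¹, mul_pos hKpos (inv_pos.mpr (by linarith)), fun x => ?_⟩
  -- pointwise lower bound on m y in terms of m x
  have hlow : ∀ y : X, m x ≤ C₀ * Real.exp (ε / 4 * d x y) * m y := by
    intro y
    have h1 := hC₀ y (d y x) (hd_nonneg y x)
    have h2 : ENNReal.ofReal (m x) ≤
        ∑' z : {z : X // d y z ≤ d y x}, ENNReal.ofReal (m z) :=
      ENNReal.le_tsum (⟨x, le_refl _⟩ : {z : X // d y z ≤ d y x})
    have h3 := h2.trans h1
    rw [ENNReal.ofReal_le_ofReal_iff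
      (mul_nonneg (mul_nonneg hC₀pos.le (Real.exp_nonneg _)) (hm y).le)] at h3
    rw [hd_symm x y]
    exact h3
  -- pointwise bound of the summand
  have hpt : ∀ y : X, Real.exp (-(ε * d x y)) ≤
      C₀ / m x * Real.exp (-(3 * ε / 4 * d x y)) * m y := by
    intro y
    rw [div_mul_eq_mul_div, div_mul_eq_mul_div, le_div_iff₀ (hm x)]
    have h1 := mul_le_mul_of_nonneg_left (hlow y)
      (Real.exp_nonneg (-(ε * d x y)))
    calc Real.exp (-(ε * d x y)) * m x
        ≤ Real.exp (-(ε * d x y)) * (C₀ * Real.exp (ε / 4 * d x y) * m y) := h1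
      _ = C₀ * (Real.exp (-(ε * d x y)) * Real.exp (ε / 4 * d x y)) * m y := by ring
      _ = C₀ * Real.exp (-(3 * ε / 4 * d x y)) * m y := by
          rw [← Real.exp_add]; congr 2; ring
  -- decompose via annuli F y = ⌊d x y⌋₊
  set F : X → ℕ := fun y => ⌊d x y⌋₊ with hF_def
  have hsum : (∑' y : X, ENNReal.ofReal (Real.exp (-(ε * d x y)))) ≤
      ∑' n : ℕ, ∑' y : {y : X // F y = n},
        ENNReal.ofReal (C₀ / m x * Real.exp (-(3 * ε / 4 * d x (y : X))) * m (y : X)) := by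
    rw [← (Equiv.sigmaFiberEquiv F).tsum_eq
      (fun y => ENNReal.ofReal (Real.exp (-(ε * d x y)))), ENNReal.tsum_sigma']
    refine ENNReal.tsum_le_tsum fun n => ENNReal.tsum_le_tsum fun y => ?_
    show ENNReal.ofReal (Real.exp (-(ε * d x (y : X)))) ≤ _
    exact ENNReal.ofReal_le_ofReal (hpt (y : X))
  refine hsum.trans ?_
  -- bound each annulus sum
  have hann : ∀ n : ℕ, (∑' y : {y : X // F y = n},
      ENNReal.ofReal (C₀ / m x * Real.exp (-(3 * ε / 4 * d x (y : X))) * m (y : X))) ≤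
      ENNReal.ofReal K * ENNReal.ofReal r ^ n := by
    intro n
    have hstep : (∑' y : {y : X // F y = n},
        ENNReal.ofReal (C₀ / m x * Real.exp (-(3 * ε / 4 * d x (y : X))) * m (y : X))) ≤
        ∑' y : {y : X // F y = n},
          ENNReal.ofReal (C₀ / m x * Real.exp (-(3 * ε / 4 * n))) * ENNReal.ofReal (m (y : X)) := by
      refine ENNReal.tsum_le_tsum fun y => ?_
      rw [← ENNReal.ofReal_mul (mul_nonneg (div_nonneg hC₀pos.le (hm x).le) (Real.exp_nonneg _))]
      refine ENNReal.ofReal_le_ofReal ?_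
      have hdn : (n : ℝ) ≤ d x (y : X) := by
        have hy2 : ⌊d x (y : X)⌋₊ = n := y.2
        have := Nat.floor_le (hd_nonneg x (y : X))
        rw [hy2] at this; exact this
      have hexp : Real.exp (-(3 * ε / 4 * d x (y : X))) ≤ Real.exp (-(3 * ε / 4 * n)) := by
        apply Real.exp_le_exp.mpr; nlinarith
      have hC₀mx : 0 ≤ C₀ / m x := div_nonneg hC₀pos.le (hm x).le
      have := mul_le_mul_of_nonneg_left hexp hC₀mx
      nlinarith [(hm (y : X)).le, mul_le_mul_of_nonneg_right this (hm (y : X)).le]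
    refine hstep.trans ?_
    rw [ENNReal.tsum_mul_left]
    -- bound the measure of the annulus by the ball of radius n+1
    have hball : (∑' y : {y : X // F y = n}, ENNReal.ofReal (m (y : X))) ≤
        ENNReal.ofReal (C₀ * Real.exp (ε / 4 * (n + 1)) * m x) := by
      refine le_trans ?_ (hC₀ x (n + 1) (by positivity))
      have hinj : Function.Injective
          (fun y : {y : X // F y = n} =>
            (⟨y.1, by
              have hy2 : ⌊d x y.1⌋₊ = n := y.2
              have := Nat.lt_floor_add_one (d x y.1)
              rw [hy2] at this
              exact this.le⟩ : {y : X // d x y ≤ (n : ℝ) + 1})) := by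
        intro a b hab
        exact Subtype.ext
          (congrArg (fun z : {y : X // d x y ≤ (n : ℝ) + 1} => (z : X)) hab)
      exact ENNReal.tsum_comp_le_tsum_of_injective hinj (fun z => ENNReal.ofReal (m z))
    calc ENNReal.ofReal (C₀ / m x * Real.exp (-(3 * ε / 4 * n))) *
          ∑' y : {y : X // F y = n}, ENNReal.ofReal (m (y : X))
        ≤ ENNReal.ofReal (C₀ / m x * Real.exp (-(3 * ε / 4 * n))) *
          ENNReal.ofReal (C₀ * Real.exp (ε / 4 * (n + 1)) * m x) := by
          exact mul_le_mul_right hball _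
      _ = ENNReal.ofReal (C₀ / m x * Real.exp (-(3 * ε / 4 * n)) *
          (C₀ * Real.exp (ε / 4 * (n + 1)) * m x)) := by
          rw [← ENNReal.ofReal_mul
            (mul_nonneg (div_nonneg hC₀pos.le (hm x).le) (Real.exp_nonneg _))]
      _ = ENNReal.ofReal (K * r ^ n) := by
          congr 1
          have hmx := (hm x).ne'
          have hrn : r ^ n = Real.exp (-(ε / 2) * n) := by
            rw [mul_comm, Real.exp_nat_mul]
          have hex : Real.exp (-(3 * ε / 4 * n)) * Real.exp (ε / 4 * ((n : ℝ) + 1)) =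
              Real.exp (ε / 4) * Real.exp (-(ε / 2) * n) := by
            rw [← Real.exp_add, ← Real.exp_add]; congr 1; ring
          calc C₀ / m x * Real.exp (-(3 * ε / 4 * n)) *
                (C₀ * Real.exp (ε / 4 * ((n : ℝ) + 1)) * m x)
              = C₀ ^ 2 * (Real.exp (-(3 * ε / 4 * n)) * Real.exp (ε / 4 * ((n : ℝ) + 1))) := by
                field_simp
            _ = C₀ ^ 2 * (Real.exp (ε / 4) * Real.exp (-(ε / 2) * n)) := by rw [hex]
            _ = K * r ^ n := by rw [hK_def, hrn]; ring
      _ = ENNReal.ofReal K * ENNReal.ofReal r ^ n := by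
          rw [ENNReal.ofReal_mul hKpos.le, ENNReal.ofReal_pow hr0.le]
  refine (ENNReal.tsum_le_tsum hann).trans ?_
  rw [ENNReal.tsum_mul_left, ENNReal.tsum_geometric]
  have h1 : (1 : ENNReal) - ENNReal.ofReal r = ENNReal.ofReal (1 - r) := by
    rw [ENNReal.ofReal_sub _ hr0.le, ENNReal.ofReal_one]
  rw [h1, ← ENNReal.ofReal_inv_of_pos (by linarith), ← ENNReal.ofReal_mul hKpos.le]
end

section
/- If (m,d) has uniform subexponential growth and the jump size s of d is finite, then the graph is locally finite: every vertex x ∈ X has only finitely many neighbors, i.e. the set {y ∈ X : b(x,y) > 0} is finite for every x ∈ X. -/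
/-- If `(m, d)` has uniform subexponential growth and the jump size of `d`
is finite (i.e. `d(x,y) ≤ s` whenever `b(x,y) > 0`), then the graph is locally finite:
every vertex has only finitely many neighbors. -/
theorem stmt3 {X : Type*} [Countable X]
    (b : X → X → ℝ)
    (hb_symm : ∀ x y, b x y = b y x)
    (hb_diag : ∀ x, b x x = 0)
    (hb_nonneg : ∀ x y, 0 ≤ b x y)
    (n : X → ℝ) (hn : ∀ x, HasSum (b x) (n x)) (hn_pos : ∀ x, 0 < n x)
    (m : X → ℝ) (hm : ∀ x, 0 < m x)
    (d : X → X → ℝ)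
    (hd_nonneg : ∀ x y, 0 ≤ d x y)
    (hd_symm : ∀ x y, d x y = d y x)
    (hd_diag : ∀ x, d x x = 0)
    (hd_tri : ∀ x y z, d x z ≤ d x y + d y z)
    (s : ℝ) (hjump : ∀ x y, 0 < b x y → d x y ≤ s)
    (husg : ∀ ε : ℝ, 0 < ε → ∃ C : ℝ, 0 < C ∧ ∀ (x : X) (r : ℝ), 0 ≤ r →
      (∑' y : {y : X // d x y ≤ r}, ENNReal.ofReal (m y)) ≤
        ENNReal.ofReal (C * Real.exp (ε * r) * m x)) :
    ∀ x : X, {y : X | 0 < b x y}.Finite := by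
  intro x
  -- there is some neighbor, hence s ≥ 0
  obtain ⟨y0, hy0⟩ : ∃ y0, 0 < b x y0 := by
    by_contra h
    push_neg at h
    have hz : ∀ y, b x y = 0 := fun y => le_antisymm (h y) (hb_nonneg x y)
    have : n x = 0 := by
      have := (hn x).unique (show HasSum (b x) 0 by simpa [funext hz] using (hasSum_zero : HasSum (fun _ : X => (0:ℝ)) 0))
      simpa using this
    exact absurd this (ne_of_gt (hn_pos x))
  have hs : 0 ≤ s := le_trans (hd_nonneg x y0) (hjump x y0 hy0)
  obtain ⟨C, hC, hC2⟩ := husg 1 one_pos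
  have hCexp : 0 < C * Real.exp (1 * s) := mul_pos hC (Real.exp_pos _)
  -- lower bound on measure of points in the ball of radius s around x
  have hlow : ∀ y : X, d x y ≤ s → m x / (C * Real.exp (1 * s)) ≤ m y := by
    intro y hy
    have h1 : ENNReal.ofReal (m x) ≤
        ∑' z : {z : X // d y z ≤ s}, ENNReal.ofReal (m z) := by
      have hx : d y x ≤ s := by rw [hd_symm]; exact hy
      exact ENNReal.le_tsum (⟨x, hx⟩ : {z : X // d y z ≤ s})
    have h2 := le_trans h1 (hC2 y s hs)
    rw [ENNReal.ofReal_le_ofReal_iff (mul_pos hCexp (hm y)).le] at h2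
    rw [div_le_iff₀ hCexp]
    linarith [h2]
  -- the ball of radius s around x is finite
  have hball : {y : X | d x y ≤ s}.Finite := by
    by_contra h
    have hinf : {y : X | d x y ≤ s}.Infinite := h
    haveI : Infinite {y : X // d x y ≤ s} := hinf.to_subtype
    have hδ : ENNReal.ofReal (m x / (C * Real.exp (1 * s))) ≠ 0 := by
      simp only [ne_eq, ENNReal.ofReal_eq_zero, not_le]
      exact div_pos (hm x) hCexp
    have htop : (∑' _ : {y : X // d x y ≤ s},
        ENNReal.ofReal (m x / (C * Real.exp (1 * s)))) = ⊤ :=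
      ENNReal.tsum_const_eq_top_of_ne_zero hδ
    have hle : (∑' _ : {y : X // d x y ≤ s},
        ENNReal.ofReal (m x / (C * Real.exp (1 * s)))) ≤
        ∑' y : {y : X // d x y ≤ s}, ENNReal.ofReal (m y) :=
      ENNReal.tsum_le_tsum fun y => ENNReal.ofReal_le_ofReal (hlow y y.2)
    have := le_trans hle (hC2 x s hs)
    rw [htop] at this
    exact absurd (eq_top_iff.mpr this) ENNReal.ofReal_ne_top
  exact hball.subset fun y hy => hjump x y hy
end

section
/- If (m,d) has uniform subexponential growth and the jump size s of d is finite, then the combinatorial vertex degree is bounded: sup_{x∈X} deg(x) < ∞, where deg(x) := #{y ∈ X : b(x,y) > 0}. -/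
/-- If `(m, d)` has uniform subexponential growth and the jump size of `d`
is finite, then the combinatorial vertex degree `deg(x) = #{y | b(x,y) > 0}` is bounded. -/
theorem stmt4 {X : Type*} [Countable X]
    (b : X → X → ℝ)
    (hb_symm : ∀ x y, b x y = b y x)
    (hb_diag : ∀ x, b x x = 0)
    (hb_nonneg : ∀ x y, 0 ≤ b x y)
    (n : X → ℝ) (hn : ∀ x, HasSum (b x) (n x)) (hn_pos : ∀ x, 0 < n x)
    (m : X → ℝ) (hm : ∀ x, 0 < m x)
    (d : X → X → ℝ)
    (hd_nonneg : ∀ x y, 0 ≤ d x y)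
    (hd_symm : ∀ x y, d x y = d y x)
    (hd_diag : ∀ x, d x x = 0)
    (hd_tri : ∀ x y z, d x z ≤ d x y + d y z)
    (s : ℝ) (hjump : ∀ x y, 0 < b x y → d x y ≤ s)
    (husg : ∀ ε : ℝ, 0 < ε → ∃ C : ℝ, 0 < C ∧ ∀ (x : X) (r : ℝ), 0 ≤ r →
      (∑' y : {y : X // d x y ≤ r}, ENNReal.ofReal (m y)) ≤
        ENNReal.ofReal (C * Real.exp (ε * r) * m x)) :
    ∃ D : ℕ, ∀ x : X, {y : X | 0 < b x y}.encard ≤ (D : ℕ∞) := by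
  classical
  rcases isEmpty_or_nonempty X with hX | hX
  · exact ⟨0, fun x => (hX.false x).elim⟩
  obtain ⟨x₀⟩ := hX
  -- s is nonnegative since x₀ has a neighbor
  have hs : 0 ≤ s := by
    have hex : ∃ y, 0 < b x₀ y := by
      by_contra hne
      push_neg at hne
      have h0 : ∀ y, b x₀ y = 0 := fun y => le_antisymm (hne y) (hb_nonneg _ _)
      have hz : HasSum (b x₀) 0 := by
        rw [funext h0]; exact hasSum_zero
      exact (hn_pos x₀).ne' ((hn x₀).unique hz)
    obtain ⟨y, hy⟩ := hex
    exact le_trans (hd_nonneg x₀ y) (hjump _ _ hy)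
  obtain ⟨C, hC, hball⟩ := husg 1 one_pos
  set A := C * Real.exp s with hA
  have hApos : 0 < A := mul_pos hC (Real.exp_pos s)
  -- key: if y is a neighbor of x then m x ≤ A * m y
  have key : ∀ x y : X, 0 < b x y → m x ≤ A * m y := by
    intro x y hxy
    have hdyx : d y x ≤ s := by rw [hd_symm]; exact hjump x y hxy
    have h1 : ENNReal.ofReal (m x) ≤ ∑' z : {z : X // d y z ≤ s}, ENNReal.ofReal (m z) :=
      ENNReal.le_tsum (⟨x, hdyx⟩ : {z : X // d y z ≤ s})
    have h2 := h1.trans (hball y s hs)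
    rw [ENNReal.ofReal_le_ofReal_iff
      (mul_nonneg (mul_nonneg hC.le (Real.exp_pos _).le) (hm y).le)] at h2
    calc m x ≤ C * Real.exp (1 * s) * m y := h2
      _ = A * m y := by rw [one_mul]
  refine ⟨⌈A ^ 2⌉₊, fun x => ?_⟩
  have hFbound : ∀ F : Finset X, (↑F ⊆ {y : X | 0 < b x y}) → (F.card : ℝ) ≤ A ^ 2 := by
    intro F hF
    have hFpos : ∀ y ∈ F, 0 < b x y := fun y hy => hF hy
    -- upper bound on the sum of masses of F
    have hsum_ub : ∑ y ∈ F, m y ≤ A * m x := by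
      have hmap : ∀ y ∈ F, d x y ≤ s := fun y hy => hjump x y (hFpos y hy)
      let F' : Finset {z : X // d x z ≤ s} :=
        F.attach.map ⟨fun y => ⟨y.1, hmap y.1 y.2⟩,
          fun a c hac => by have h := congrArg Subtype.val hac; exact Subtype.ext h⟩
      have heq : ∑ y ∈ F, ENNReal.ofReal (m y) = ∑ z ∈ F', ENNReal.ofReal (m z.1) := by
        rw [Finset.sum_map]
        exact (Finset.sum_attach F fun y => ENNReal.ofReal (m y)).symm
      have h1 : ∑ y ∈ F, ENNReal.ofReal (m y) ≤
          ∑' z : {z : X // d x z ≤ s}, ENNReal.ofReal (m z) := by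
        rw [heq]; exact ENNReal.sum_le_tsum F'
      have h2 := h1.trans (hball x s hs)
      rw [← ENNReal.ofReal_sum_of_nonneg (fun y _ => (hm y).le),
        ENNReal.ofReal_le_ofReal_iff
          (mul_nonneg (mul_nonneg hC.le (Real.exp_pos _).le) (hm x).le)] at h2
      calc ∑ y ∈ F, m y ≤ C * Real.exp (1 * s) * m x := h2
        _ = A * m x := by rw [one_mul]
    -- lower bound
    have hsum_lb : (F.card : ℝ) * (m x / A) ≤ ∑ y ∈ F, m y := by
      have hterm : ∀ y ∈ F, m x / A ≤ m y := by
        intro y hy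
        rw [div_le_iff₀ hApos]
        calc m x ≤ A * m y := key x y (hFpos y hy)
          _ = m y * A := mul_comm _ _
      have := Finset.card_nsmul_le_sum F (fun y => m y) (m x / A) hterm
      simpa [nsmul_eq_mul] using this
    have hcomb := hsum_lb.trans hsum_ub
    have hmx := hm x
    rw [div_eq_mul_inv] at hcomb
    have h' := mul_le_mul_of_nonneg_right hcomb hApos.le
    have heq' : (F.card : ℝ) * (m x * A⁻¹) * A = F.card * m x := by
      field_simp
    rw [heq'] at h'
    have hA2 : (F.card : ℝ) * m x ≤ A ^ 2 * m x := by
      calc (F.card : ℝ) * m x ≤ A * m x * A := h'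
        _ = A ^ 2 * m x := by ring
    exact le_of_mul_le_mul_right (by linarith) hmx
  -- conclude encard bound
  by_contra hcon
  push_neg at hcon
  have hle : ((⌈A ^ 2⌉₊ + 1 : ℕ) : ℕ∞) ≤ {y : X | 0 < b x y}.encard := by
    exact Order.add_one_le_of_lt (by exact_mod_cast hcon)
  obtain ⟨t, hts, htcard⟩ := Set.exists_subset_encard_eq hle
  have htfin : t.Finite := Set.finite_of_encard_eq_coe htcard
  have hcard : htfin.toFinset.card = ⌈A ^ 2⌉₊ + 1 := by
    have := htfin.encard_eq_coe_toFinset_card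
    rw [this] at htcard
    exact_mod_cast htcard
  have hsub : ↑htfin.toFinset ⊆ {y : X | 0 < b x y} := by
    rw [Set.Finite.coe_toFinset]; exact hts
  have := hFbound htfin.toFinset hsub
  rw [hcard] at this
  have hceil : A ^ 2 ≤ (⌈A ^ 2⌉₊ : ℝ) := Nat.le_ceil _
  push_cast at this
  linarith
end

section
/- Assume there is D > 0 such that b(x,y) ≤ D for all x, y ∈ X and m(x) ≥ 1/D for all x ∈ X. If (m,d) has uniform subexponential growth and the jump size of d is finite, then the graph has bounded geometry: sup_{x∈X} n(x)/m(x) < ∞. -/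
/-- Suppose `b ≤ D` and `m ≥ 1/D` for some `D > 0`. If `(m, d)` has uniform
subexponential growth and the jump size of `d` is finite, then the graph has bounded geometry:
`sup_x n(x)/m(x) < ∞`. -/
theorem stmt5 {X : Type*} [Countable X]
    (b : X → X → ℝ)
    (hb_symm : ∀ x y, b x y = b y x)
    (hb_diag : ∀ x, b x x = 0)
    (hb_nonneg : ∀ x y, 0 ≤ b x y)
    (n : X → ℝ) (hn : ∀ x, HasSum (b x) (n x)) (hn_pos : ∀ x, 0 < n x)
    (m : X → ℝ) (hm : ∀ x, 0 < m x)
    (D : ℝ) (hD : 0 < D) (hbD : ∀ x y, b x y ≤ D) (hmD : ∀ x, 1 / D ≤ m x)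
    (d : X → X → ℝ)
    (hd_nonneg : ∀ x y, 0 ≤ d x y)
    (hd_symm : ∀ x y, d x y = d y x)
    (hd_diag : ∀ x, d x x = 0)
    (hd_tri : ∀ x y z, d x z ≤ d x y + d y z)
    (s : ℝ) (hjump : ∀ x y, 0 < b x y → d x y ≤ s)
    (husg : ∀ ε : ℝ, 0 < ε → ∃ C : ℝ, 0 < C ∧ ∀ (x : X) (r : ℝ), 0 ≤ r →
      (∑' y : {y : X // d x y ≤ r}, ENNReal.ofReal (m y)) ≤
        ENNReal.ofReal (C * Real.exp (ε * r) * m x)) :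
    ∃ M : ℝ, ∀ x : X, n x / m x ≤ M := by

  rcases isEmpty_or_nonempty X with hX | hX
  · exact ⟨0, fun x => (hX.false x).elim⟩
  have hs0 : 0 ≤ s := by
    obtain ⟨x⟩ := hX
    have hex : ∃ y, 0 < b x y := by
      by_contra hc
      push_neg at hc
      have hz : ∀ y, b x y = 0 := fun y => le_antisymm (hc y) (hb_nonneg x y)
      have h0 : (0 : ℝ) = n x := by
        have := (hn x).tsum_eq
        simpa [hz] using this
      linarith [hn_pos x]
    obtain ⟨y, hy⟩ := hex
    exact le_trans (hd_nonneg x y) (hjump x y hy)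
  obtain ⟨C, hC, hball⟩ := husg 1 one_pos
  refine ⟨D ^ 2 * (C * Real.exp (1 * s)), fun x => ?_⟩
  have hmx := hm x
  have hRHS : 0 ≤ D ^ 2 * (C * Real.exp (1 * s) * m x) := by positivity
  have key : ENNReal.ofReal (n x) ≤ ENNReal.ofReal (D ^ 2 * (C * Real.exp (1 * s) * m x)) := by
    have h1 : ENNReal.ofReal (n x) = ∑' y, ENNReal.ofReal (b x y) := by
      rw [← (hn x).tsum_eq, ENNReal.ofReal_tsum_of_nonneg (fun y => hb_nonneg x y)
        (hn x).summable]
    have h2 : (∑' y, ENNReal.ofReal (b x y)) =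
        ∑' y : {y : X | d x y ≤ s}, ENNReal.ofReal (b x y) := by
      rw [tsum_subtype {y : X | d x y ≤ s} (fun y => ENNReal.ofReal (b x y))]
      congr 1
      funext y
      by_cases hy : d x y ≤ s
      · simp [Set.indicator_of_mem, hy, Set.mem_setOf_eq]
      · have hb0 : b x y = 0 := by
          by_contra h
          exact hy (hjump x y (lt_of_le_of_ne (hb_nonneg x y) (Ne.symm h)))
        simp [Set.indicator_of_notMem, hy, hb0, Set.mem_setOf_eq]
    have h3 : (∑' y : {y : X | d x y ≤ s}, ENNReal.ofReal (b x y)) ≤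
        ∑' y : {y : X | d x y ≤ s}, ENNReal.ofReal (D ^ 2) * ENNReal.ofReal (m y) := by
      refine ENNReal.tsum_le_tsum fun y => ?_
      rw [← ENNReal.ofReal_mul (by positivity)]
      apply ENNReal.ofReal_le_ofReal
      calc b x y.1 ≤ D := hbD x y.1
        _ = D ^ 2 * (1 / D) := by field_simp
        _ ≤ D ^ 2 * m y.1 := by
            apply mul_le_mul_of_nonneg_left (hmD y.1) (by positivity)
    rw [h1, h2]
    calc (∑' y : {y : X | d x y ≤ s}, ENNReal.ofReal (b x y))
        ≤ ∑' y : {y : X | d x y ≤ s}, ENNReal.ofReal (D ^ 2) * ENNReal.ofReal (m y) := h3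
      _ = ENNReal.ofReal (D ^ 2) * ∑' y : {y : X | d x y ≤ s}, ENNReal.ofReal (m y) :=
          ENNReal.tsum_mul_left
      _ ≤ ENNReal.ofReal (D ^ 2) * ENNReal.ofReal (C * Real.exp (1 * s) * m x) := by
          exact mul_le_mul_right (hball x s hs0) _
      _ = ENNReal.ofReal (D ^ 2 * (C * Real.exp (1 * s) * m x)) := by
          rw [← ENNReal.ofReal_mul (by positivity)]
  have hreal : n x ≤ D ^ 2 * (C * Real.exp (1 * s) * m x) :=
    (ENNReal.ofReal_le_ofReal_iff hRHS).mp key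
  rw [div_le_iff₀ hmx]
  calc n x ≤ D ^ 2 * (C * Real.exp (1 * s) * m x) := hreal
    _ = D ^ 2 * (C * Real.exp (1 * s)) * m x := by ring
end

section
/- Let d be an intrinsic pseudo metric whose jump size is at most s < ∞. Then there exists C > 0, depending only on s, such that for every ε ∈ (0,1], every ψ ∈ Lip_ε and every finitely supported f : X → ℂ: |Q(e^{−ψ} f, e^{ψ} f) − Q(f,f)| ≤ C ε² ‖f‖₂² + C ε ‖f‖₂ Q(f)^{1/2}. -/
open scoped ComplexConjugate

/-- The quadratic form `Q(f,g) = (1/2) ∑_{x,y} b(x,y)(f(x)-f(y)) conj(g(x)-g(y))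
      + ∑_x c(x) f(x) conj(g(x))`. -/
noncomputable def graphForm {X : Type*} (b : X → X → ℝ) (c : X → ℝ) (f g : X → ℂ) : ℂ :=
  (1 / 2) * ∑' q : X × X, (b q.1 q.2 : ℂ) * (f q.1 - f q.2) * conj (g q.1 - g q.2)
    + ∑' x : X, (c x : ℂ) * f x * conj (g x)

/-- The `ℓ²(X,m)` norm of a function. -/
noncomputable def l2norm {X : Type*} (m : X → ℝ) (f : X → ℂ) : ℝ :=
  Real.sqrt (∑' x : X, ‖f x‖ ^ 2 * m x)

lemma exp_sub_one_abs (u : ℝ) : |Real.exp u - 1| ≤ |u| * Real.exp |u| := by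
  rcases le_or_gt 0 u with h | h
  · rw [abs_of_nonneg h, abs_of_nonneg (by linarith [Real.one_le_exp h] : (0:ℝ) ≤ Real.exp u - 1)]
    have h2 : Real.exp u * Real.exp (-u) = 1 := by rw [← Real.exp_add]; simp
    nlinarith [Real.add_one_le_exp (-u), Real.exp_pos u]
  · rw [abs_of_neg h, abs_of_nonpos (by linarith [Real.exp_lt_one_iff.mpr h] : Real.exp u - 1 ≤ 0)]
    nlinarith [Real.add_one_le_exp u, Real.one_le_exp (le_of_lt (neg_pos.mpr h))]

lemma aux_summable {X : Type} [DecidableEq X] (b : X → X → ℝ) (hb0 : ∀ x y, 0 ≤ b x y)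
    (hbsym : ∀ x y, b x y = b y x) (hbsum : ∀ x, Summable (b x))
    (S : Finset X) (M : ℝ) {E : Type*} [NormedAddCommGroup E] [CompleteSpace E]
    (g : X × X → E)
    (hg : ∀ q : X × X, ‖g q‖ ≤
      b q.1 q.2 * M * ((if q.1 ∈ S then (1:ℝ) else 0) + if q.2 ∈ S then (1:ℝ) else 0)) :
    Summable g := by
  have h1 : Summable (fun q : X × X => b q.1 q.2 * (if q.1 ∈ S then (1:ℝ) else 0)) := by
    have hpos : ∀ q : X × X, (0:ℝ) ≤ b q.1 q.2 * (if q.1 ∈ S then (1:ℝ) else 0) :=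
      fun q => mul_nonneg (hb0 _ _) (by split <;> norm_num)
    refine (summable_prod_of_nonneg hpos).mpr ⟨?_, ?_⟩
    · intro x
      show Summable fun y => b x y * (if x ∈ S then (1:ℝ) else 0)
      exact (hbsum x).mul_right _
    · apply summable_of_ne_finset_zero (s := S)
      intro x hx
      simp only [if_neg hx, mul_zero]
      exact tsum_zero
  have h2 : Summable (fun q : X × X => b q.1 q.2 * (if q.2 ∈ S then (1:ℝ) else 0)) := by
    have := (Equiv.prodComm X X).summable_iff.mpr h1
    apply this.congr
    intro q
    simp [Equiv.prodComm, hbsym q.1 q.2]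
  apply Summable.of_norm_bounded ?_ hg
  have h3 := ((h1.add h2).mul_left M)
  apply h3.congr
  intro q
  ring

/-- per-pair bound helper for the exponential factors -/
lemma exp_pair_bound (s r u : ℝ) (hs : 0 ≤ s) (hr : 0 ≤ r) (hu : |u| ≤ r) (hrs : r ≤ s) :
    |1 - Real.exp u| ≤ r * Real.exp (3 * s) ∧
    |2 - Real.exp u - Real.exp (-u)| ≤ r ^ 2 * Real.exp (3 * s) := by
  have hes : Real.exp |u| ≤ Real.exp s := Real.exp_le_exp.mpr (le_trans hu hrs)
  have h1 : |Real.exp u - 1| ≤ r * Real.exp s := by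
    calc |Real.exp u - 1| ≤ |u| * Real.exp |u| := exp_sub_one_abs u
    _ ≤ r * Real.exp s := by
        exact mul_le_mul hu hes (Real.exp_pos _).le hr
  have hA : Real.exp s ≤ Real.exp (3 * s) := Real.exp_le_exp.mpr (by linarith)
  constructor
  · rw [abs_sub_comm]
    exact le_trans h1 (by nlinarith [Real.exp_pos s])
  · have e1 : Real.exp (-u) * Real.exp u = 1 := by rw [← Real.exp_add]; simp
    have factored : Real.exp u + Real.exp (-u) - 2 = Real.exp (-u) * (Real.exp u - 1) ^ 2 := by
      linear_combination (2 - Real.exp u) * e1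
    have hnn : (0:ℝ) ≤ Real.exp u + Real.exp (-u) - 2 := by
      rw [factored]; positivity
    have hz : Real.exp (-u) ≤ Real.exp s := by
      apply Real.exp_le_exp.mpr
      have := neg_abs_le u
      linarith [le_trans hu hrs]
    have habs : |2 - Real.exp u - Real.exp (-u)| = Real.exp u + Real.exp (-u) - 2 := by
      rw [abs_of_nonpos (by linarith)]; ring
    rw [habs, factored]
    have hsq : (Real.exp u - 1) ^ 2 ≤ (r * Real.exp s) ^ 2 := by
      have := abs_nonneg (Real.exp u - 1)
      nlinarith [h1, abs_nonneg (Real.exp u - 1), sq_abs (Real.exp u - 1)]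
    have e3 : Real.exp s * (Real.exp s * Real.exp s) = Real.exp (3 * s) := by
      rw [← Real.exp_add, ← Real.exp_add]; ring_nf
    calc Real.exp (-u) * (Real.exp u - 1) ^ 2 ≤ Real.exp s * (r * Real.exp s) ^ 2 := by
          apply mul_le_mul hz hsq (by positivity) (Real.exp_pos _).le
    _ = r ^ 2 * (Real.exp s * (Real.exp s * Real.exp s)) := by ring
    _ = r ^ 2 * Real.exp (3 * s) := by rw [e3]

set_option maxHeartbeats 1600000 in
/-- Let `d` be an intrinsic pseudo metric with jump size at most `s < ∞`.
There is `C > 0`, depending only on `s`, such that for every `ε ∈ (0,1]`, every `ψ ∈ Lip_ε`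
and every finitely supported `f : X → ℂ`:
`|Q(e^{-ψ} f, e^{ψ} f) - Q(f,f)| ≤ C ε² ‖f‖₂² + C ε ‖f‖₂ Q(f)^{1/2}`. -/
theorem stmt10 (s : ℝ) (hs : 0 ≤ s) :
    ∃ C : ℝ, 0 < C ∧
      ∀ (X : Type) (_ : Countable X)
        (b : X → X → ℝ) (c : X → ℝ) (m : X → ℝ) (d : X → X → ℝ),
        (∀ x y, b x y = b y x) → (∀ x, b x x = 0) → (∀ x y, 0 ≤ b x y) →
        (∀ x, Summable (b x)) → (∀ x, 0 < ∑' y, b x y) →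
        (∀ x, 0 ≤ c x) → (∀ x, 0 < m x) →
        (∀ x y, 0 ≤ d x y) → (∀ x y, d x y = d y x) → (∀ x, d x x = 0) →
        (∀ x y z, d x z ≤ d x y + d y z) →
        -- intrinsic metric: ∑_y b(x,y) d(x,y)² ≤ m(x)
        (∀ x, (∑' y : X, ENNReal.ofReal (b x y * d x y ^ 2)) ≤ ENNReal.ofReal (m x)) →
        -- jump size at most s
        (∀ x y, 0 < b x y → d x y ≤ s) →
        ∀ ε : ℝ, 0 < ε → ε ≤ 1 →
        ∀ ψ : X → ℝ, (∃ K : ℝ, ∀ x, |ψ x| ≤ K) → (∀ x y, ψ x - ψ y ≤ ε * d x y) →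
        ∀ f : X → ℂ, (Function.support f).Finite →
        ‖graphForm b c (fun x => (Real.exp (-ψ x) : ℂ) * f x)
            (fun x => (Real.exp (ψ x) : ℂ) * f x) - graphForm b c f f‖ ≤
          C * ε ^ 2 * l2norm m f ^ 2 +
            C * ε * l2norm m f * Real.sqrt (graphForm b c f f).re := by
  refine ⟨2 * Real.exp (3 * s), by positivity, ?_⟩
  intro X _ b c m d hbsym hbdiag hb0 hbsum hbn hc0 hm hd0 hdsym hddiag htri hintr hjump
    ε hε hε1 ψ hψK hLip f hf
  classical
  obtain ⟨K, hK⟩ := hψK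
  set A := Real.exp (3 * s) with hA
  have hApos : 0 < A := Real.exp_pos _
  set S : Finset X := hf.toFinset with hSdef
  have hfS : ∀ x, x ∉ S → f x = 0 := by
    intro x hx
    by_contra hxf
    exact hx (hf.mem_toFinset.mpr hxf)
  set M₀ : ℝ := ∑ x ∈ S, ‖f x‖ with hM₀def
  have hM₀0 : 0 ≤ M₀ := Finset.sum_nonneg fun _ _ => norm_nonneg _
  have hfM : ∀ x, ‖f x‖ ≤ M₀ := by
    intro x
    by_cases hx : x ∈ S
    · exact Finset.single_le_sum (fun i _ => norm_nonneg (f i)) hx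
    · simp [hfS x hx, hM₀0]
  have hexpK : ∀ t : ℝ, |t| ≤ K → Real.exp t ≤ Real.exp K :=
    fun t ht => Real.exp_le_exp.mpr (le_trans (le_abs_self t) ht)
  have hKey : ∀ (t : ℝ) (x' : X), |t| ≤ K → ‖(Real.exp t : ℂ) * f x'‖ ≤ Real.exp K * M₀ := by
    intro t x' ht
    rw [norm_mul, Complex.norm_real, Real.norm_eq_abs, abs_of_pos (Real.exp_pos t)]
    exact mul_le_mul (hexpK t ht) (hfM x') (norm_nonneg _) (Real.exp_pos K).le
  -- Summability of the two quadratic-form integrands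
  have hSum1 : Summable (fun q : X × X => (b q.1 q.2 : ℂ) *
      ((Real.exp (-ψ q.1) : ℂ) * f q.1 - (Real.exp (-ψ q.2) : ℂ) * f q.2) *
      conj ((Real.exp (ψ q.1) : ℂ) * f q.1 - (Real.exp (ψ q.2) : ℂ) * f q.2)) := by
    apply aux_summable b hb0 hbsym hbsum S ((2 * (Real.exp K * M₀)) ^ 2)
    rintro ⟨x, y⟩
    have hz1 : ‖(Real.exp (-ψ x) : ℂ) * f x - (Real.exp (-ψ y) : ℂ) * f y‖ ≤
        2 * (Real.exp K * M₀) := by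
      refine le_trans (norm_sub_le _ _) ?_
      have e1 := hKey (-ψ x) x (by rw [abs_neg]; exact hK x)
      have e2 := hKey (-ψ y) y (by rw [abs_neg]; exact hK y)
      linarith
    have hz2 : ‖(Real.exp (ψ x) : ℂ) * f x - (Real.exp (ψ y) : ℂ) * f y‖ ≤
        2 * (Real.exp K * M₀) := by
      refine le_trans (norm_sub_le _ _) ?_
      have e1 := hKey (ψ x) x (hK x)
      have e2 := hKey (ψ y) y (hK y)
      linarith
    rw [norm_mul, norm_mul, RCLike.norm_conj, Complex.norm_real, Real.norm_eq_abs,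
      abs_of_nonneg (hb0 x y)]
    by_cases h1 : x ∈ S
    · have hge : (1:ℝ) ≤ (if x ∈ S then (1:ℝ) else 0) + (if y ∈ S then (1:ℝ) else 0) := by
        rw [if_pos h1]; split <;> norm_num
      have hmm : ‖(Real.exp (-ψ x) : ℂ) * f x - (Real.exp (-ψ y) : ℂ) * f y‖ *
          ‖(Real.exp (ψ x) : ℂ) * f x - (Real.exp (ψ y) : ℂ) * f y‖ ≤
          (2 * (Real.exp K * M₀)) ^ 2 := by
        rw [sq]; exact mul_le_mul hz1 hz2 (norm_nonneg _) (by positivity)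
      nlinarith [hb0 x y, mul_le_mul_of_nonneg_left hmm (hb0 x y),
        mul_nonneg (mul_nonneg (hb0 x y) (sq_nonneg (2 * (Real.exp K * M₀)))) (by linarith : (0:ℝ) ≤ (if x ∈ S then (1:ℝ) else 0) + (if y ∈ S then (1:ℝ) else 0) - 1)]
    · by_cases h2 : y ∈ S
      · have hge : (1:ℝ) ≤ (if x ∈ S then (1:ℝ) else 0) + (if y ∈ S then (1:ℝ) else 0) := by
          rw [if_pos h2, if_neg h1]; norm_num
        have hmm : ‖(Real.exp (-ψ x) : ℂ) * f x - (Real.exp (-ψ y) : ℂ) * f y‖ *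
            ‖(Real.exp (ψ x) : ℂ) * f x - (Real.exp (ψ y) : ℂ) * f y‖ ≤
            (2 * (Real.exp K * M₀)) ^ 2 := by
          rw [sq]; exact mul_le_mul hz1 hz2 (norm_nonneg _) (by positivity)
        nlinarith [hb0 x y, mul_le_mul_of_nonneg_left hmm (hb0 x y),
          mul_nonneg (mul_nonneg (hb0 x y) (sq_nonneg (2 * (Real.exp K * M₀)))) (by linarith : (0:ℝ) ≤ (if x ∈ S then (1:ℝ) else 0) + (if y ∈ S then (1:ℝ) else 0) - 1)]
      · simp [hfS x h1, hfS y h2, if_neg h1, if_neg h2]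
  have hSum0 : Summable (fun q : X × X => (b q.1 q.2 : ℂ) *
      (f q.1 - f q.2) * conj (f q.1 - f q.2)) := by
    apply aux_summable b hb0 hbsym hbsum S ((2 * M₀) ^ 2)
    rintro ⟨x, y⟩
    have hz1 : ‖f x - f y‖ ≤ 2 * M₀ := by
      refine le_trans (norm_sub_le _ _) ?_
      linarith [hfM x, hfM y]
    rw [norm_mul, norm_mul, RCLike.norm_conj, Complex.norm_real, Real.norm_eq_abs,
      abs_of_nonneg (hb0 x y)]
    by_cases h1 : x ∈ S
    · have hge : (1:ℝ) ≤ (if x ∈ S then (1:ℝ) else 0) + (if y ∈ S then (1:ℝ) else 0) := by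
        rw [if_pos h1]; split <;> norm_num
      have hmm : ‖f x - f y‖ * ‖f x - f y‖ ≤ (2 * M₀) ^ 2 := by
        rw [sq]; exact mul_le_mul hz1 hz1 (norm_nonneg _) (by positivity)
      nlinarith [hb0 x y, mul_le_mul_of_nonneg_left hmm (hb0 x y),
        mul_nonneg (mul_nonneg (hb0 x y) (sq_nonneg (2 * M₀))) (by linarith : (0:ℝ) ≤ (if x ∈ S then (1:ℝ) else 0) + (if y ∈ S then (1:ℝ) else 0) - 1)]
    · by_cases h2 : y ∈ S
      · have hge : (1:ℝ) ≤ (if x ∈ S then (1:ℝ) else 0) + (if y ∈ S then (1:ℝ) else 0) := by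
          rw [if_pos h2, if_neg h1]; norm_num
        have hmm : ‖f x - f y‖ * ‖f x - f y‖ ≤ (2 * M₀) ^ 2 := by
          rw [sq]; exact mul_le_mul hz1 hz1 (norm_nonneg _) (by positivity)
        nlinarith [hb0 x y, mul_le_mul_of_nonneg_left hmm (hb0 x y),
          mul_nonneg (mul_nonneg (hb0 x y) (sq_nonneg (2 * M₀))) (by linarith : (0:ℝ) ≤ (if x ∈ S then (1:ℝ) else 0) + (if y ∈ S then (1:ℝ) else 0) - 1)]
      · simp [hfS x h1, hfS y h2, if_neg h1, if_neg h2]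
  -- potential terms agree pointwise
  have hcpt : ∀ x : X, (c x : ℂ) * ((Real.exp (-ψ x) : ℂ) * f x) *
      conj ((Real.exp (ψ x) : ℂ) * f x) = (c x : ℂ) * f x * conj (f x) := by
    intro x
    have h12 : (Real.exp (-ψ x) : ℂ) * (Real.exp (ψ x) : ℂ) = 1 := by
      rw [← Complex.ofReal_mul, ← Real.exp_add]; simp
    calc (c x : ℂ) * ((Real.exp (-ψ x) : ℂ) * f x) * conj ((Real.exp (ψ x) : ℂ) * f x)
        = (c x : ℂ) * f x * conj (f x) * ((Real.exp (-ψ x) : ℂ) * (Real.exp (ψ x) : ℂ)) := by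
          rw [map_mul, Complex.conj_ofReal]; ring
    _ = _ := by rw [h12, mul_one]
  -- real representation of Q(f,f)
  have hF0q : ∀ q : X × X, (b q.1 q.2 : ℂ) * (f q.1 - f q.2) * conj (f q.1 - f q.2) =
      ((b q.1 q.2 * ‖f q.1 - f q.2‖ ^ 2 : ℝ) : ℂ) := by
    intro q
    rw [mul_assoc, Complex.mul_conj, Complex.normSq_eq_norm_sq]
    push_cast
    ring
  have hcq : ∀ x : X, (c x : ℂ) * f x * conj (f x) = ((c x * ‖f x‖ ^ 2 : ℝ) : ℂ) := by
    intro x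
    rw [mul_assoc, Complex.mul_conj, Complex.normSq_eq_norm_sq]
    push_cast
    ring
  have hSum0re : Summable (fun q : X × X => b q.1 q.2 * ‖f q.1 - f q.2‖ ^ 2) := by
    have := summable_norm_iff.mpr hSum0
    apply this.congr
    intro q
    rw [norm_mul, norm_mul, RCLike.norm_conj, Complex.norm_real, Real.norm_eq_abs,
      abs_of_nonneg (hb0 q.1 q.2)]
    ring
  have hSumc : Summable (fun x : X => c x * ‖f x‖ ^ 2) := by
    apply summable_of_ne_finset_zero (s := S)
    intro x hx
    simp [hfS x hx]
  set T0 : ℝ := ∑' q : X × X, b q.1 q.2 * ‖f q.1 - f q.2‖ ^ 2 with hT0def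
  set Tc : ℝ := ∑' x : X, c x * ‖f x‖ ^ 2 with hTcdef
  have hT00 : 0 ≤ T0 := tsum_nonneg fun q => mul_nonneg (hb0 _ _) (by positivity)
  have hTc0 : 0 ≤ Tc := tsum_nonneg fun x => mul_nonneg (hc0 _) (by positivity)
  have hQform : graphForm b c f f = ((1 / 2 * T0 + Tc : ℝ) : ℂ) := by
    simp only [graphForm]
    have h1 : (∑' q : X × X, (b q.1 q.2 : ℂ) * (f q.1 - f q.2) * conj (f q.1 - f q.2)) =
        ((T0 : ℝ) : ℂ) := by
      rw [hT0def, Complex.ofReal_tsum]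
      exact tsum_congr hF0q
    have h2 : (∑' x : X, (c x : ℂ) * f x * conj (f x)) = ((Tc : ℝ) : ℂ) := by
      rw [hTcdef, Complex.ofReal_tsum]
      exact tsum_congr hcq
    rw [h1, h2]
    push_cast
    ring
  have hQre : (graphForm b c f f).re = 1 / 2 * T0 + Tc := by
    rw [hQform, Complex.ofReal_re]
  have hQ0 : 0 ≤ (graphForm b c f f).re := by rw [hQre]; linarith
  -- finite-sum consequence of the intrinsic metric property
  have hintrS : ∀ x : X, ∑ y ∈ S, b x y * d x y ^ 2 ≤ m x := by
    intro x
    have h1 : ∑ y ∈ S, ENNReal.ofReal (b x y * d x y ^ 2) ≤ ENNReal.ofReal (m x) :=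
      le_trans (Summable.sum_le_tsum S (fun _ _ => zero_le) ENNReal.summable) (hintr x)
    rw [← ENNReal.ofReal_sum_of_nonneg (fun y _ => mul_nonneg (hb0 _ _) (sq_nonneg _))] at h1
    exact (ENNReal.ofReal_le_ofReal_iff (hm x).le).mp h1
  -- the ℓ² norm as a finite sum
  set L : ℝ := ∑ x ∈ S, ‖f x‖ ^ 2 * m x with hLdef
  have hL0 : 0 ≤ L := Finset.sum_nonneg fun x _ => mul_nonneg (by positivity) (hm x).le
  have hLnorm : l2norm m f = Real.sqrt L := by
    rw [l2norm, tsum_eq_sum (s := S) (fun x hx => by simp [hfS x hx])]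
  have hLsq : l2norm m f ^ 2 = L := by rw [hLnorm, Real.sq_sqrt hL0]
  -- key finite-sum bounds
  have hB1 : ∑ q ∈ S ×ˢ S, b q.1 q.2 * d q.1 q.2 ^ 2 * ‖f q.1‖ ^ 2 ≤ L := by
    rw [Finset.sum_product]
    calc ∑ x ∈ S, ∑ y ∈ S, b x y * d x y ^ 2 * ‖f x‖ ^ 2
        = ∑ x ∈ S, (∑ y ∈ S, b x y * d x y ^ 2) * ‖f x‖ ^ 2 :=
          Finset.sum_congr rfl fun x _ => (Finset.sum_mul _ _ _).symm
    _ ≤ ∑ x ∈ S, m x * ‖f x‖ ^ 2 :=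
          Finset.sum_le_sum fun x _ => mul_le_mul_of_nonneg_right (hintrS x) (by positivity)
    _ = L := Finset.sum_congr rfl fun x _ => mul_comm _ _
  have hB2 : ∑ q ∈ S ×ˢ S, b q.1 q.2 * d q.1 q.2 ^ 2 * ‖f q.2‖ ^ 2 ≤ L := by
    rw [Finset.sum_product, Finset.sum_comm]
    calc ∑ y ∈ S, ∑ x ∈ S, b x y * d x y ^ 2 * ‖f y‖ ^ 2
        = ∑ y ∈ S, ∑ x ∈ S, b y x * d y x ^ 2 * ‖f y‖ ^ 2 :=
          Finset.sum_congr rfl fun y _ => Finset.sum_congr rfl fun x _ => by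
            rw [hbsym x y, hdsym x y]
    _ = ∑ y ∈ S, (∑ x ∈ S, b y x * d y x ^ 2) * ‖f y‖ ^ 2 :=
          Finset.sum_congr rfl fun y _ => (Finset.sum_mul _ _ _).symm
    _ ≤ ∑ y ∈ S, m y * ‖f y‖ ^ 2 :=
          Finset.sum_le_sum fun y _ => mul_le_mul_of_nonneg_right (hintrS y) (by positivity)
    _ = L := Finset.sum_congr rfl fun y _ => mul_comm _ _
  have hB3 : ∑ q ∈ S ×ˢ S, b q.1 q.2 * ‖f q.1 - f q.2‖ ^ 2 ≤ 2 * (graphForm b c f f).re := by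
    have h1 : ∑ q ∈ S ×ˢ S, b q.1 q.2 * ‖f q.1 - f q.2‖ ^ 2 ≤ T0 :=
      Summable.sum_le_tsum _ (fun q _ => mul_nonneg (hb0 _ _) (by positivity)) hSum0re
    rw [hQre]
    linarith
  -- pointwise algebraic identity
  have hGdef : ∀ q : X × X,
      (b q.1 q.2 : ℂ) * ((Real.exp (-ψ q.1) : ℂ) * f q.1 - (Real.exp (-ψ q.2) : ℂ) * f q.2) *
        conj ((Real.exp (ψ q.1) : ℂ) * f q.1 - (Real.exp (ψ q.2) : ℂ) * f q.2) -
      (b q.1 q.2 : ℂ) * (f q.1 - f q.2) * conj (f q.1 - f q.2) = ((b q.1 q.2 : ℂ) * ((1 - (Real.exp (ψ q.2 - ψ q.1) : ℂ)) * (f q.1 * conj (f q.2) - f q.2 * conj (f q.1)) + ((2:ℂ) - (Real.exp (ψ q.2 - ψ q.1) : ℂ) - (Real.exp (ψ q.1 - ψ q.2) : ℂ)) * (f q.2 * conj (f q.1)))) := by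
    rintro ⟨x, y⟩
    have hu : (Real.exp (ψ x) : ℂ) ≠ 0 := Complex.ofReal_ne_zero.mpr (Real.exp_pos _).ne'
    have hv : (Real.exp (ψ y) : ℂ) ≠ 0 := Complex.ofReal_ne_zero.mpr (Real.exp_pos _).ne'
    simp only [Real.exp_sub, Real.exp_neg, map_sub, map_mul, Complex.conj_ofReal]
    push_cast
    field_simp
    ring
  have hGsupp : ∀ q : X × X, q ∉ S ×ˢ S → ((b q.1 q.2 : ℂ) * ((1 - (Real.exp (ψ q.2 - ψ q.1) : ℂ)) * (f q.1 * conj (f q.2) - f q.2 * conj (f q.1)) + ((2:ℂ) - (Real.exp (ψ q.2 - ψ q.1) : ℂ) - (Real.exp (ψ q.1 - ψ q.2) : ℂ)) * (f q.2 * conj (f q.1)))) = 0 := by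
    rintro ⟨x, y⟩ hq
    rw [Finset.mem_product] at hq
    by_cases h1 : x ∈ S
    · have h2 : y ∉ S := fun h => hq ⟨h1, h⟩
      simp [hfS y h2]
    · simp [hfS x h1]
  have hD : graphForm b c (fun x => (Real.exp (-ψ x) : ℂ) * f x)
        (fun x => (Real.exp (ψ x) : ℂ) * f x) - graphForm b c f f =
      (1 / 2 : ℂ) * ∑ q ∈ S ×ˢ S, ((b q.1 q.2 : ℂ) * ((1 - (Real.exp (ψ q.2 - ψ q.1) : ℂ)) * (f q.1 * conj (f q.2) - f q.2 * conj (f q.1)) + ((2:ℂ) - (Real.exp (ψ q.2 - ψ q.1) : ℂ) - (Real.exp (ψ q.1 - ψ q.2) : ℂ)) * (f q.2 * conj (f q.1)))) := by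
    simp only [graphForm]
    rw [tsum_congr hcpt]
    have ht : (∑' q : X × X, (b q.1 q.2 : ℂ) *
        ((Real.exp (-ψ q.1) : ℂ) * f q.1 - (Real.exp (-ψ q.2) : ℂ) * f q.2) *
        conj ((Real.exp (ψ q.1) : ℂ) * f q.1 - (Real.exp (ψ q.2) : ℂ) * f q.2)) -
        (∑' q : X × X, (b q.1 q.2 : ℂ) * (f q.1 - f q.2) * conj (f q.1 - f q.2)) =
        ∑ q ∈ S ×ˢ S, ((b q.1 q.2 : ℂ) * ((1 - (Real.exp (ψ q.2 - ψ q.1) : ℂ)) * (f q.1 * conj (f q.2) - f q.2 * conj (f q.1)) + ((2:ℂ) - (Real.exp (ψ q.2 - ψ q.1) : ℂ) - (Real.exp (ψ q.1 - ψ q.2) : ℂ)) * (f q.2 * conj (f q.1)))) := by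
      rw [← Summable.tsum_sub hSum1 hSum0, tsum_congr hGdef]
      exact tsum_eq_sum hGsupp
    linear_combination (1 / 2 : ℂ) * ht
  -- per-pair estimate
  have hPP : ∀ q : X × X, ‖((b q.1 q.2 : ℂ) * ((1 - (Real.exp (ψ q.2 - ψ q.1) : ℂ)) * (f q.1 * conj (f q.2) - f q.2 * conj (f q.1)) + ((2:ℂ) - (Real.exp (ψ q.2 - ψ q.1) : ℂ) - (Real.exp (ψ q.1 - ψ q.2) : ℂ)) * (f q.2 * conj (f q.1))))‖ ≤
      A * ε ^ 2 * (b q.1 q.2 * d q.1 q.2 ^ 2 * (‖f q.1‖ ^ 2 + ‖f q.2‖ ^ 2)) +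
      2 * A * ε * ((Real.sqrt (b q.1 q.2) * d q.1 q.2 * ‖f q.1‖) *
        (Real.sqrt (b q.1 q.2) * ‖f q.1 - f q.2‖)) := by
    rintro ⟨x, y⟩
    by_cases hbz : b x y = 0
    · simp [hbz]
    · have hb : 0 < b x y := lt_of_le_of_ne (hb0 x y) (Ne.symm hbz)
      have hds : d x y ≤ s := hjump x y hb
      have hαd : |ψ y - ψ x| ≤ ε * d x y := by
        rw [abs_le]
        constructor
        · have := hLip x y; linarith
        · have := hLip y x; rw [hdsym y x] at this; linarith
      have hr0 : 0 ≤ ε * d x y := mul_nonneg hε.le (hd0 x y)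
      have hrs : ε * d x y ≤ s := by nlinarith [hd0 x y]
      obtain ⟨hE1, hE2⟩ := exp_pair_bound s (ε * d x y) (ψ y - ψ x) hs hr0 hαd hrs
      rw [neg_sub] at hE2
      -- norms of the two complex coefficients
      have hc1 : ‖(1 : ℂ) - (Real.exp (ψ y - ψ x) : ℂ)‖ = |1 - Real.exp (ψ y - ψ x)| := by
        rw [show (1 : ℂ) - (Real.exp (ψ y - ψ x) : ℂ) =
          ((1 - Real.exp (ψ y - ψ x) : ℝ) : ℂ) by push_cast; ring, Complex.norm_real,
          Real.norm_eq_abs]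
      have hc2 : ‖(2 : ℂ) - (Real.exp (ψ y - ψ x) : ℂ) - (Real.exp (ψ x - ψ y) : ℂ)‖ =
          |2 - Real.exp (ψ y - ψ x) - Real.exp (ψ x - ψ y)| := by
        rw [show (2 : ℂ) - (Real.exp (ψ y - ψ x) : ℂ) - (Real.exp (ψ x - ψ y) : ℂ) =
          ((2 - Real.exp (ψ y - ψ x) - Real.exp (ψ x - ψ y) : ℝ) : ℂ) by push_cast; ring,
          Complex.norm_real, Real.norm_eq_abs]
      have hPQ : ‖f x * conj (f y) - f y * conj (f x)‖ ≤ 2 * ‖f x‖ * ‖f x - f y‖ := by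
        have hid : f x * conj (f y) - f y * conj (f x) =
            f x * conj (f y - f x) + (f x - f y) * conj (f x) := by
          rw [map_sub]; ring
        calc ‖f x * conj (f y) - f y * conj (f x)‖
            = ‖f x * conj (f y - f x) + (f x - f y) * conj (f x)‖ := by rw [hid]
        _ ≤ ‖f x * conj (f y - f x)‖ + ‖(f x - f y) * conj (f x)‖ := norm_add_le _ _
        _ = ‖f x‖ * ‖f y - f x‖ + ‖f x - f y‖ * ‖f x‖ := by
            rw [norm_mul, norm_mul, RCLike.norm_conj, RCLike.norm_conj]
        _ = 2 * ‖f x‖ * ‖f x - f y‖ := by rw [norm_sub_rev (f y)]; ring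
      have hQn : ‖f y * conj (f x)‖ = ‖f y‖ * ‖f x‖ := by
        rw [norm_mul, RCLike.norm_conj]
      -- split the norm
      have hsplit : ‖((b x y : ℂ) * ((1 - (Real.exp (ψ y - ψ x) : ℂ)) * (f x * conj (f y) - f y * conj (f x)) + ((2:ℂ) - (Real.exp (ψ y - ψ x) : ℂ) - (Real.exp (ψ x - ψ y) : ℂ)) * (f y * conj (f x))))‖ ≤ b x y * (|1 - Real.exp (ψ y - ψ x)| *
          ‖f x * conj (f y) - f y * conj (f x)‖ +
          |2 - Real.exp (ψ y - ψ x) - Real.exp (ψ x - ψ y)| * (‖f y‖ * ‖f x‖)) := by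
        rw [norm_mul, Complex.norm_real, Real.norm_eq_abs, abs_of_nonneg (hb0 x y)]
        apply mul_le_mul_of_nonneg_left _ (hb0 x y)
        refine le_trans (norm_add_le _ _) ?_
        rw [norm_mul, norm_mul, hc1, hc2, hQn]
      refine le_trans hsplit ?_
      -- term 1
      have t1 : b x y * (|1 - Real.exp (ψ y - ψ x)| *
          ‖f x * conj (f y) - f y * conj (f x)‖) ≤
          2 * A * ε * ((Real.sqrt (b x y) * d x y * ‖f x‖) *
            (Real.sqrt (b x y) * ‖f x - f y‖)) := by
        have h1 : |1 - Real.exp (ψ y - ψ x)| * ‖f x * conj (f y) - f y * conj (f x)‖ ≤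
            (ε * d x y * A) * (2 * ‖f x‖ * ‖f x - f y‖) :=
          mul_le_mul hE1 hPQ (norm_nonneg _) (by positivity)
        calc b x y * (|1 - Real.exp (ψ y - ψ x)| * ‖f x * conj (f y) - f y * conj (f x)‖)
            ≤ b x y * ((ε * d x y * A) * (2 * ‖f x‖ * ‖f x - f y‖)) :=
              mul_le_mul_of_nonneg_left h1 (hb0 x y)
        _ = 2 * A * ε * ((Real.sqrt (b x y) * Real.sqrt (b x y)) * d x y * ‖f x‖ *
            ‖f x - f y‖) := by rw [Real.mul_self_sqrt (hb0 x y)]; ring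
        _ = 2 * A * ε * ((Real.sqrt (b x y) * d x y * ‖f x‖) *
            (Real.sqrt (b x y) * ‖f x - f y‖)) := by ring
      -- term 2
      have hkey : ‖f y‖ * ‖f x‖ ≤ ‖f x‖ ^ 2 + ‖f y‖ ^ 2 := by
        nlinarith [sq_nonneg (‖f x‖ - ‖f y‖), sq_nonneg (‖f x‖ + ‖f y‖)]
      have t2 : b x y * (|2 - Real.exp (ψ y - ψ x) - Real.exp (ψ x - ψ y)| *
          (‖f y‖ * ‖f x‖)) ≤
          A * ε ^ 2 * (b x y * d x y ^ 2 * (‖f x‖ ^ 2 + ‖f y‖ ^ 2)) := by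
        calc b x y * (|2 - Real.exp (ψ y - ψ x) - Real.exp (ψ x - ψ y)| * (‖f y‖ * ‖f x‖))
            ≤ b x y * (((ε * d x y) ^ 2 * A) * (‖f y‖ * ‖f x‖)) :=
              mul_le_mul_of_nonneg_left
                (mul_le_mul_of_nonneg_right hE2 (by positivity)) (hb0 x y)
        _ = (A * ε ^ 2 * (b x y * d x y ^ 2)) * (‖f y‖ * ‖f x‖) := by ring
        _ ≤ (A * ε ^ 2 * (b x y * d x y ^ 2)) * (‖f x‖ ^ 2 + ‖f y‖ ^ 2) := by
            apply mul_le_mul_of_nonneg_left hkey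
            have := hb0 x y
            positivity
        _ = A * ε ^ 2 * (b x y * d x y ^ 2 * (‖f x‖ ^ 2 + ‖f y‖ ^ 2)) := by ring
      calc b x y * (|1 - Real.exp (ψ y - ψ x)| * ‖f x * conj (f y) - f y * conj (f x)‖ +
          |2 - Real.exp (ψ y - ψ x) - Real.exp (ψ x - ψ y)| * (‖f y‖ * ‖f x‖))
          = b x y * (|1 - Real.exp (ψ y - ψ x)| * ‖f x * conj (f y) - f y * conj (f x)‖) +
            b x y * (|2 - Real.exp (ψ y - ψ x) - Real.exp (ψ x - ψ y)| * (‖f y‖ * ‖f x‖)) := by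
            ring
      _ ≤ _ := by linarith [t1, t2]
  -- sum the per-pair estimates
  have hSa : ∑ q ∈ S ×ˢ S, b q.1 q.2 * d q.1 q.2 ^ 2 * (‖f q.1‖ ^ 2 + ‖f q.2‖ ^ 2) ≤ 2 * L := by
    have hh : ∀ q ∈ S ×ˢ S, b q.1 q.2 * d q.1 q.2 ^ 2 * (‖f q.1‖ ^ 2 + ‖f q.2‖ ^ 2) =
        b q.1 q.2 * d q.1 q.2 ^ 2 * ‖f q.1‖ ^ 2 + b q.1 q.2 * d q.1 q.2 ^ 2 * ‖f q.2‖ ^ 2 :=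
      fun q _ => by ring
    rw [Finset.sum_congr rfl hh, Finset.sum_add_distrib]
    linarith [hB1, hB2]
  have hCS : ∑ q ∈ S ×ˢ S, (Real.sqrt (b q.1 q.2) * d q.1 q.2 * ‖f q.1‖) *
      (Real.sqrt (b q.1 q.2) * ‖f q.1 - f q.2‖) ≤
      Real.sqrt L * Real.sqrt (2 * (graphForm b c f f).re) := by
    have h1 := Finset.sum_mul_sq_le_sq_mul_sq (S ×ˢ S)
      (fun q => Real.sqrt (b q.1 q.2) * d q.1 q.2 * ‖f q.1‖)
      (fun q => Real.sqrt (b q.1 q.2) * ‖f q.1 - f q.2‖)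
    have hu2 : ∑ q ∈ S ×ˢ S, (Real.sqrt (b q.1 q.2) * d q.1 q.2 * ‖f q.1‖) ^ 2 =
        ∑ q ∈ S ×ˢ S, b q.1 q.2 * d q.1 q.2 ^ 2 * ‖f q.1‖ ^ 2 :=
      Finset.sum_congr rfl fun q _ => by
        rw [mul_pow, mul_pow, Real.sq_sqrt (hb0 _ _)]
    have hw2 : ∑ q ∈ S ×ˢ S, (Real.sqrt (b q.1 q.2) * ‖f q.1 - f q.2‖) ^ 2 =
        ∑ q ∈ S ×ˢ S, b q.1 q.2 * ‖f q.1 - f q.2‖ ^ 2 :=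
      Finset.sum_congr rfl fun q _ => by rw [mul_pow, Real.sq_sqrt (hb0 _ _)]
    rw [hu2, hw2] at h1
    have h2 : (∑ q ∈ S ×ˢ S, (Real.sqrt (b q.1 q.2) * d q.1 q.2 * ‖f q.1‖) *
        (Real.sqrt (b q.1 q.2) * ‖f q.1 - f q.2‖)) ^ 2 ≤
        L * (2 * (graphForm b c f f).re) := by
      refine le_trans h1 (mul_le_mul hB1 hB3 ?_ hL0)
      exact Finset.sum_nonneg fun q _ => mul_nonneg (hb0 _ _) (sq_nonneg _)
    have hnn : 0 ≤ ∑ q ∈ S ×ˢ S, (Real.sqrt (b q.1 q.2) * d q.1 q.2 * ‖f q.1‖) *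
        (Real.sqrt (b q.1 q.2) * ‖f q.1 - f q.2‖) :=
      Finset.sum_nonneg fun q _ => mul_nonneg
        (mul_nonneg (mul_nonneg (Real.sqrt_nonneg _) (hd0 _ _)) (norm_nonneg _))
        (mul_nonneg (Real.sqrt_nonneg _) (norm_nonneg _))
    calc ∑ q ∈ S ×ˢ S, (Real.sqrt (b q.1 q.2) * d q.1 q.2 * ‖f q.1‖) *
        (Real.sqrt (b q.1 q.2) * ‖f q.1 - f q.2‖)
        = Real.sqrt ((∑ q ∈ S ×ˢ S, (Real.sqrt (b q.1 q.2) * d q.1 q.2 * ‖f q.1‖) *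
          (Real.sqrt (b q.1 q.2) * ‖f q.1 - f q.2‖)) ^ 2) := (Real.sqrt_sq hnn).symm
    _ ≤ Real.sqrt (L * (2 * (graphForm b c f f).re)) := Real.sqrt_le_sqrt h2
    _ = Real.sqrt L * Real.sqrt (2 * (graphForm b c f f).re) := Real.sqrt_mul hL0 _
  have hsum_bound : ∑ q ∈ S ×ˢ S, ‖((b q.1 q.2 : ℂ) * ((1 - (Real.exp (ψ q.2 - ψ q.1) : ℂ)) * (f q.1 * conj (f q.2) - f q.2 * conj (f q.1)) + ((2:ℂ) - (Real.exp (ψ q.2 - ψ q.1) : ℂ) - (Real.exp (ψ q.1 - ψ q.2) : ℂ)) * (f q.2 * conj (f q.1))))‖ ≤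
      A * ε ^ 2 * (2 * L) + 2 * A * ε *
        (Real.sqrt L * Real.sqrt (2 * (graphForm b c f f).re)) := by
    calc ∑ q ∈ S ×ˢ S, ‖((b q.1 q.2 : ℂ) * ((1 - (Real.exp (ψ q.2 - ψ q.1) : ℂ)) * (f q.1 * conj (f q.2) - f q.2 * conj (f q.1)) + ((2:ℂ) - (Real.exp (ψ q.2 - ψ q.1) : ℂ) - (Real.exp (ψ q.1 - ψ q.2) : ℂ)) * (f q.2 * conj (f q.1))))‖
        ≤ ∑ q ∈ S ×ˢ S, (A * ε ^ 2 * (b q.1 q.2 * d q.1 q.2 ^ 2 *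
            (‖f q.1‖ ^ 2 + ‖f q.2‖ ^ 2)) +
          2 * A * ε * ((Real.sqrt (b q.1 q.2) * d q.1 q.2 * ‖f q.1‖) *
            (Real.sqrt (b q.1 q.2) * ‖f q.1 - f q.2‖))) :=
          Finset.sum_le_sum fun q _ => hPP q
    _ = A * ε ^ 2 * (∑ q ∈ S ×ˢ S, b q.1 q.2 * d q.1 q.2 ^ 2 *
          (‖f q.1‖ ^ 2 + ‖f q.2‖ ^ 2)) +
        2 * A * ε * (∑ q ∈ S ×ˢ S, (Real.sqrt (b q.1 q.2) * d q.1 q.2 * ‖f q.1‖) *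
          (Real.sqrt (b q.1 q.2) * ‖f q.1 - f q.2‖)) := by
        rw [Finset.sum_add_distrib, ← Finset.mul_sum, ← Finset.mul_sum]
    _ ≤ _ := by
        have ha1 : (0:ℝ) ≤ A * ε ^ 2 := by positivity
        have ha2 : (0:ℝ) ≤ 2 * A * ε := by positivity
        have := mul_le_mul_of_nonneg_left hSa ha1
        have := mul_le_mul_of_nonneg_left hCS ha2
        linarith
  -- final assembly
  rw [hD]
  have hhalf : ‖(1 / 2 : ℂ)‖ = 1 / 2 := by norm_num
  calc ‖(1 / 2 : ℂ) * ∑ q ∈ S ×ˢ S, ((b q.1 q.2 : ℂ) * ((1 - (Real.exp (ψ q.2 - ψ q.1) : ℂ)) * (f q.1 * conj (f q.2) - f q.2 * conj (f q.1)) + ((2:ℂ) - (Real.exp (ψ q.2 - ψ q.1) : ℂ) - (Real.exp (ψ q.1 - ψ q.2) : ℂ)) * (f q.2 * conj (f q.1))))‖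
      = 1 / 2 * ‖∑ q ∈ S ×ˢ S, ((b q.1 q.2 : ℂ) * ((1 - (Real.exp (ψ q.2 - ψ q.1) : ℂ)) * (f q.1 * conj (f q.2) - f q.2 * conj (f q.1)) + ((2:ℂ) - (Real.exp (ψ q.2 - ψ q.1) : ℂ) - (Real.exp (ψ q.1 - ψ q.2) : ℂ)) * (f q.2 * conj (f q.1))))‖ := by rw [norm_mul, hhalf]
  _ ≤ 1 / 2 * ∑ q ∈ S ×ˢ S, ‖((b q.1 q.2 : ℂ) * ((1 - (Real.exp (ψ q.2 - ψ q.1) : ℂ)) * (f q.1 * conj (f q.2) - f q.2 * conj (f q.1)) + ((2:ℂ) - (Real.exp (ψ q.2 - ψ q.1) : ℂ) - (Real.exp (ψ q.1 - ψ q.2) : ℂ)) * (f q.2 * conj (f q.1))))‖ :=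
      mul_le_mul_of_nonneg_left (norm_sum_le _ _) (by norm_num)
  _ ≤ 1 / 2 * (A * ε ^ 2 * (2 * L) + 2 * A * ε *
      (Real.sqrt L * Real.sqrt (2 * (graphForm b c f f).re))) := by linarith [hsum_bound]
  _ ≤ 2 * A * ε ^ 2 * l2norm m f ^ 2 + 2 * A * ε * l2norm m f *
      Real.sqrt (graphForm b c f f).re := by
    rw [hLsq, hLnorm]
    have hs2 : Real.sqrt (2 * (graphForm b c f f).re) =
        Real.sqrt 2 * Real.sqrt (graphForm b c f f).re := Real.sqrt_mul (by norm_num) _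
    have hsqrt2 : Real.sqrt 2 ≤ 2 := by
      nlinarith [Real.sq_sqrt (by norm_num : (0:ℝ) ≤ 2), Real.sqrt_nonneg 2]
    rw [hs2]
    have h3 : Real.sqrt L * (Real.sqrt 2 * Real.sqrt (graphForm b c f f).re) ≤
        Real.sqrt L * (2 * Real.sqrt (graphForm b c f f).re) := by
      apply mul_le_mul_of_nonneg_left _ (Real.sqrt_nonneg L)
      exact mul_le_mul_of_nonneg_right hsqrt2 (Real.sqrt_nonneg _)
    nlinarith [mul_nonneg (mul_nonneg hApos.le (sq_nonneg ε)) hL0,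
      mul_le_mul_of_nonneg_left h3 (mul_nonneg hApos.le hε.le),
      Real.sqrt_nonneg L, Real.sqrt_nonneg (graphForm b c f f).re]
end

section
/- Assume m = n and that the graph is bipartite, i.e. X is the disjoint union of sets X₁ and X₂ such that b(x,y) > 0 implies (x,y) ∈ (X₁ × X₂) ∪ (X₂ × X₁). Then for every p ∈ [1,∞] the spectrum of the normalized Laplacian is symmetric with respect to the line {z ∈ ℂ : Re z = 1}: λ ∈ σ(L_p) if and only if 2 − λ ∈ σ(L_p). -/
open MeasureTheory
open scoped ENNReal

/-- Assume `m = n` and that the graph is bipartite: `X = X₁ ∪ X₂` with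
`X₁, X₂` disjoint and `b(x,y) > 0` implying `(x,y) ∈ (X₁ × X₂) ∪ (X₂ × X₁)`. Then for every
`p ∈ [1,∞]` the spectrum of the normalized Laplacian on `ℓ^p(X,n)` is symmetric with respect
to the line `{Re z = 1}`: `λ ∈ σ(L_p)` iff `2 - λ ∈ σ(L_p)`. Here `ℓ^p(X,n)` is realized as
`Lp ℂ p μ` for the weighted counting measure `μ = ∑_x n(x) δ_x`. -/
theorem stmt14 {X : Type*} [Countable X] [MeasurableSpace X] [MeasurableSingletonClass X]
    (b : X → X → ℝ)
    (hb_symm : ∀ x y, b x y = b y x)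
    (hb_diag : ∀ x, b x x = 0)
    (hb_nonneg : ∀ x y, 0 ≤ b x y)
    (n : X → ℝ) (hn : ∀ x, HasSum (b x) (n x)) (hn_pos : ∀ x, 0 < n x)
    (X₁ X₂ : Set X)
    (hdisj : Disjoint X₁ X₂) (hcover : X₁ ∪ X₂ = Set.univ)
    (hbip : ∀ x y, 0 < b x y → (x ∈ X₁ ∧ y ∈ X₂) ∨ (x ∈ X₂ ∧ y ∈ X₁))
    (μ : Measure X)
    (hμ : μ = Measure.sum fun x => ENNReal.ofReal (n x) • Measure.dirac x)
    (p : ℝ≥0∞) [Fact (1 ≤ p)]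
    (L : Lp ℂ p μ →L[ℂ] Lp ℂ p μ)
    (hL : ∀ f : Lp ℂ p μ, ∀ᵐ x ∂μ,
      (L f : X → ℂ) x =
        (n x : ℂ)⁻¹ * ∑' y : X, (b x y : ℂ) * ((f : X → ℂ) x - (f : X → ℂ) y)) :
    ∀ lam : ℂ, lam ∈ spectrum ℂ L ↔ 2 - lam ∈ spectrum ℂ L := by
  classical
  -- every point is an atom of μ
  have hatom : ∀ z : X, μ {z} = ENNReal.ofReal (n z) := by
    intro z
    rw [hμ, Measure.sum_apply _ (measurableSet_singleton z)]
    have h1 : ∀ x : X, (ENNReal.ofReal (n x) • Measure.dirac x) {z}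
        = if x = z then ENNReal.ofReal (n z) else 0 := by
      intro x
      rw [Measure.smul_apply, smul_eq_mul, Measure.dirac_apply]
      by_cases h : x = z
      · simp [h]
      · simp [Set.indicator, h]
    rw [tsum_congr h1, tsum_eq_single z (by intro x hx; simp [hx])]
    simp
  -- a.e. statements hold everywhere
  have hae : ∀ {P : X → Prop}, (∀ᵐ x ∂μ, P x) → ∀ x, P x := by
    intro P h x
    by_contra hx
    have h0 : μ {y | ¬ P y} = 0 := ae_iff.mp h
    have h2 : μ {x} ≤ μ {y | ¬ P y} := measure_mono (by simpa using hx)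
    rw [hatom x, h0] at h2
    exact absurd (le_antisymm h2 (zero_le))
      (ne_of_gt (ENNReal.ofReal_pos.mpr (hn_pos x)))
  -- lintegral formula
  have hlint : ∀ g : X → ℝ≥0∞, ∫⁻ x, g x ∂μ = ∑' x, ENNReal.ofReal (n x) * g x := by
    intro g
    rw [hμ, lintegral_sum_measure]
    refine tsum_congr fun x => ?_
    rw [lintegral_smul_measure, lintegral_dirac, smul_eq_mul]
  -- sign function
  set e : X → ℂ := fun x => if x ∈ X₁ then 1 else -1 with he_def
  have he_sq : ∀ x, e x * e x = 1 := by
    intro x; by_cases h : x ∈ X₁ <;> simp [he_def, h]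
  have he_norm : ∀ x, ‖e x‖ = 1 := by
    intro x; by_cases h : x ∈ X₁ <;> simp [he_def, h]
  have he_mul : ∀ x y, 0 < b x y → e x * e y = -1 := by
    intro x y h
    rcases hbip x y h with ⟨h1, h2⟩ | ⟨h1, h2⟩
    · have hy : y ∉ X₁ := Set.disjoint_right.mp hdisj h2
      simp [he_def, h1, hy]
    · have hx : x ∉ X₁ := Set.disjoint_right.mp hdisj h1
      simp [he_def, hx, h2]
  -- multiplication by e preserves MemLp
  have hmem : ∀ f : Lp ℂ p μ, MemLp (fun x => e x * (f : X → ℂ) x) p μ := by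
    intro f
    refine MemLp.of_le (Lp.memLp f) ?_ ?_
    · exact ((measurable_of_countable _).stronglyMeasurable).aestronglyMeasurable
    · filter_upwards with x
      rw [norm_mul, he_norm x, one_mul]
  -- the multiplication operator
  let Ulin : Lp ℂ p μ →ₗ[ℂ] Lp ℂ p μ :=
    { toFun := fun f => (hmem f).toLp _
      map_add' := by
        intro f g
        apply Lp.ext
        filter_upwards [MemLp.coeFn_toLp (hmem (f + g)), MemLp.coeFn_toLp (hmem f),
          MemLp.coeFn_toLp (hmem g), Lp.coeFn_add f g,
          Lp.coeFn_add ((hmem f).toLp _) ((hmem g).toLp _)] with x h1 h2 h3 h4 h5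
        rw [h1, h5, Pi.add_apply, h2, h3, h4, Pi.add_apply, mul_add]
      map_smul' := by
        intro c f
        apply Lp.ext
        filter_upwards [MemLp.coeFn_toLp (hmem (c • f)), MemLp.coeFn_toLp (hmem f),
          Lp.coeFn_smul c f, Lp.coeFn_smul c ((hmem f).toLp _)] with x h1 h2 h3 h4
        rw [RingHom.id_apply, h1, h4, Pi.smul_apply, h2, h3, Pi.smul_apply,
          smul_eq_mul, smul_eq_mul]
        ring }
  have hbound : ∀ f : Lp ℂ p μ, ‖Ulin f‖ ≤ 1 * ‖f‖ := by
    intro f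
    have h1 : ‖Ulin f‖ = (eLpNorm (fun x => e x * (f : X → ℂ) x) p μ).toReal :=
      Lp.norm_toLp _ (hmem f)
    have h2 : eLpNorm (fun x => e x * (f : X → ℂ) x) p μ = eLpNorm (f : X → ℂ) p μ := by
      refine eLpNorm_congr_norm_ae ?_
      filter_upwards with x
      rw [norm_mul, he_norm x, one_mul]
    rw [one_mul, h1, h2, Lp.norm_def]
  let U : Lp ℂ p μ →L[ℂ] Lp ℂ p μ := LinearMap.mkContinuous Ulin 1 hbound
  have hU : ∀ f : Lp ℂ p μ, ∀ x, (U f : X → ℂ) x = e x * (f : X → ℂ) x := by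
    intro f
    exact hae (MemLp.coeFn_toLp (hmem f))
  have hUU : ∀ f, U (U f) = f := by
    intro f
    apply Lp.ext
    refine Filter.Eventually.of_forall fun x => ?_
    rw [hU, hU, ← mul_assoc, he_sq, one_mul]
  -- b x y ≤ n y
  have hb_le : ∀ x y, b x y ≤ n y := by
    intro x y
    rw [hb_symm x y]
    exact le_hasSum (hn y) x fun z _ => hb_nonneg y z
  -- summability
  have hsum : ∀ f : Lp ℂ p μ, ∀ x, Summable (fun y => b x y * ‖(f : X → ℂ) y‖) := by
    intro f x
    by_cases hp : p = ∞
    · -- bounded case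
      subst hp
      have hM : eLpNorm (f : X → ℂ) ∞ μ ≠ ∞ := (Lp.memLp f).2.ne
      set M : ℝ := (eLpNorm (f : X → ℂ) ∞ μ).toReal with hMdef
      have hbd : ∀ y, ‖(f : X → ℂ) y‖ ≤ M := by
        have h1 : ∀ᵐ y ∂μ, (‖(f : X → ℂ) y‖₊ : ℝ≥0∞) ≤ eLpNorm (f : X → ℂ) ∞ μ := by
          rw [eLpNorm_exponent_top, eLpNormEssSup]
          exact ENNReal.ae_le_essSup _
        intro y
        have h2 := hae h1 y
        have h3 := ENNReal.toReal_mono hM h2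
        simpa [hMdef] using h3
      refine Summable.of_nonneg_of_le
        (fun y => mul_nonneg (hb_nonneg x y) (norm_nonneg _))
        (fun y => mul_le_mul_of_nonneg_left (hbd y) (hb_nonneg x y))
        ((hn x).summable.mul_right M)
    · -- p finite
      have hp1 : (1 : ℝ≥0∞) ≤ p := Fact.out
      have hp0 : p ≠ 0 := by
        intro h; rw [h] at hp1; exact absurd hp1 (by simp)
      set pr : ℝ := p.toReal with hpr
      have hpr1 : 1 ≤ pr := by
        rw [hpr, ← ENNReal.toReal_one]
        exact ENNReal.toReal_mono hp hp1
      have hint : ∫⁻ y, (‖(f : X → ℂ) y‖₊ : ℝ≥0∞) ^ pr ∂μ ≠ ∞ := by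
        intro h
        have h1 := (Lp.memLp f).2
        rw [eLpNorm_eq_lintegral_rpow_enorm_toReal hp0 hp] at h1
        simp only [enorm_eq_nnnorm] at h1
        rw [h] at h1
        rw [ENNReal.top_rpow_of_pos (by rw [one_div]; exact inv_pos.mpr (by linarith))] at h1
        exact absurd h1 (by simp)
      rw [hlint] at hint
      have hS : Summable (fun y => n y * ‖(f : X → ℂ) y‖ ^ pr) := by
        have h1 := ENNReal.summable_toReal hint
        refine h1.congr fun y => ?_
        rw [ENNReal.toReal_mul, ← ENNReal.toReal_rpow]
        simp [ENNReal.toReal_ofReal (hn_pos y).le]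
      refine Summable.of_nonneg_of_le
        (fun y => mul_nonneg (hb_nonneg x y) (norm_nonneg _))
        (fun y => ?_) (((hn x).summable).add hS)
      rcases le_total ‖(f : X → ℂ) y‖ 1 with h | h
      · have h1 : b x y * ‖(f : X → ℂ) y‖ ≤ b x y := by
          nlinarith [hb_nonneg x y, norm_nonneg ((f : X → ℂ) y)]
        have h2 : (0:ℝ) ≤ n y * ‖(f : X → ℂ) y‖ ^ pr :=
          mul_nonneg (hn_pos y).le (Real.rpow_nonneg (norm_nonneg _) _)
        linarith
      · have h1 : ‖(f : X → ℂ) y‖ ≤ ‖(f : X → ℂ) y‖ ^ pr := by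
          nth_rewrite 1 [← Real.rpow_one ‖(f : X → ℂ) y‖]
          exact Real.rpow_le_rpow_of_exponent_le h hpr1
        have h2 : b x y * ‖(f : X → ℂ) y‖ ≤ n y * ‖(f : X → ℂ) y‖ ^ pr := by
          calc b x y * ‖(f : X → ℂ) y‖ ≤ n y * ‖(f : X → ℂ) y‖ :=
                mul_le_mul_of_nonneg_right (hb_le x y) (norm_nonneg _)
            _ ≤ n y * ‖(f : X → ℂ) y‖ ^ pr :=
                mul_le_mul_of_nonneg_left h1 (le_of_lt (hn_pos y))
        linarith [hb_nonneg x y]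
  -- complex summability facts
  have hsumC : ∀ f : Lp ℂ p μ, ∀ x, Summable (fun y => (b x y : ℂ) * (f : X → ℂ) y) := by
    intro f x
    refine Summable.of_norm ?_
    refine (hsum f x).congr fun y => ?_
    rw [norm_mul, Complex.norm_real, Real.norm_eq_abs, abs_of_nonneg (hb_nonneg x y)]
  have hnbC : ∀ x, HasSum (fun y => ((b x y : ℝ) : ℂ)) ((n x : ℝ) : ℂ) := by
    intro x
    exact (hn x).map (algebraMap ℝ ℂ) (continuous_algebraMap ℝ ℂ)
  -- the conjugation identity
  have hconj : ∀ f : Lp ℂ p μ, U (L (U f)) = (2 : ℂ) • f - L f := by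
    intro f
    apply Lp.ext
    have hLf : ∀ x, (L f : X → ℂ) x
        = (n x : ℂ)⁻¹ * ∑' y : X, (b x y : ℂ) * ((f : X → ℂ) x - (f : X → ℂ) y) :=
      hae (hL f)
    have hLUf : ∀ x, (L (U f) : X → ℂ) x
        = (n x : ℂ)⁻¹ * ∑' y : X, (b x y : ℂ) * ((U f : X → ℂ) x - (U f : X → ℂ) y) :=
      hae (hL (U f))
    filter_upwards [Lp.coeFn_sub ((2 : ℂ) • f) (L f), Lp.coeFn_smul (2 : ℂ) f] with x hx1 hx2
    set F : X → ℂ := (f : X → ℂ) with hF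
    have hrhs : (((2 : ℂ) • f - L f : Lp ℂ p μ) : X → ℂ) x = 2 * F x - (L f : X → ℂ) x := by
      rw [hx1, Pi.sub_apply, hx2, Pi.smul_apply, smul_eq_mul]
    rw [hrhs, hU (L (U f)) x, hLUf x, hLf x]
    have htc : (∑' y : X, (b x y : ℂ) * ((U f : X → ℂ) x - (U f : X → ℂ) y))
        = ∑' y : X, (b x y : ℂ) * (e x * F x - e y * F y) := by
      exact tsum_congr fun y => by rw [hU f x, hU f y]
    rw [htc]
    have hnne : ((n x : ℝ) : ℂ) ≠ 0 := by
      exact_mod_cast ne_of_gt (hn_pos x)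
    -- summability of the pieces
    have S1 : Summable (fun y => (b x y : ℂ) * F x) := (hnbC x).summable.mul_right (F x)
    have S2 : Summable (fun y => (b x y : ℂ) * (F x - F y)) := by
      have := S1.sub (hsumC f x)
      refine this.congr fun y => ?_
      ring
    -- key termwise identity
    have hterm : ∀ y, e x * ((b x y : ℂ) * (e x * F x - e y * F y))
        = 2 * ((b x y : ℂ) * F x) - (b x y : ℂ) * (F x - F y) := by
      intro y
      rcases (hb_nonneg x y).lt_or_eq with h | h
      · have h1 := he_sq x
        have h2 := he_mul x y h
        linear_combination (b x y : ℂ) * F x * h1 - (b x y : ℂ) * F y * h2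
      · rw [← h]
        push_cast
        ring
    have key : e x * (∑' y : X, (b x y : ℂ) * (e x * F x - e y * F y))
        = 2 * ((n x : ℂ) * F x) - ∑' y : X, (b x y : ℂ) * (F x - F y) := by
      rw [← tsum_mul_left]
      rw [tsum_congr hterm]
      rw [Summable.tsum_sub (S1.mul_left 2) S2]
      congr 1
      rw [tsum_mul_left, tsum_mul_right, (hnbC x).tsum_eq]
    calc e x * ((n x : ℂ)⁻¹ * ∑' y : X, (b x y : ℂ) * (e x * F x - e y * F y))
        = (n x : ℂ)⁻¹ * (e x * ∑' y : X, (b x y : ℂ) * (e x * F x - e y * F y)) := by ring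
      _ = (n x : ℂ)⁻¹ * (2 * ((n x : ℂ) * F x) - ∑' y : X, (b x y : ℂ) * (F x - F y)) := by
          rw [key]
      _ = 2 * F x - (n x : ℂ)⁻¹ * ∑' y : X, (b x y : ℂ) * (F x - F y) := by
          field_simp
  -- operator identity
  have hU2 : U * U = 1 := by
    ext f
    rw [ContinuousLinearMap.mul_apply, ContinuousLinearMap.one_apply, hUU]
  have hULU : U * L * U = (2 : ℂ) • (1 : Lp ℂ p μ →L[ℂ] Lp ℂ p μ) - L := by
    ext f
    rw [ContinuousLinearMap.mul_apply, ContinuousLinearMap.mul_apply,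
      ContinuousLinearMap.sub_apply, ContinuousLinearMap.smul_apply,
      ContinuousLinearMap.one_apply, hconj f]
  -- spectrum argument
  let u : (Lp ℂ p μ →L[ℂ] Lp ℂ p μ)ˣ := ⟨U, U, hU2, hU2⟩
  have hσ : spectrum ℂ ((2 : ℂ) • (1 : Lp ℂ p μ →L[ℂ] Lp ℂ p μ) - L) = spectrum ℂ L := by
    rw [← hULU]
    have : U * L * U = (u : Lp ℂ p μ →L[ℂ] Lp ℂ p μ) * L * ((u⁻¹ : _) : _) := rfl
    rw [this, spectrum.units_conjugate]
  have key : ∀ z : ℂ, z ∈ spectrum ℂ L ↔ (2 - z) ∈ spectrum ℂ L := by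
    intro z
    conv_rhs => rw [← hσ]
    rw [spectrum.mem_iff, spectrum.mem_iff]
    have heq : algebraMap ℂ (Lp ℂ p μ →L[ℂ] Lp ℂ p μ) (2 - z)
        - ((2 : ℂ) • (1 : Lp ℂ p μ →L[ℂ] Lp ℂ p μ) - L)
        = -(algebraMap ℂ (Lp ℂ p μ →L[ℂ] Lp ℂ p μ) z - L) := by
      rw [Algebra.algebraMap_eq_smul_one, Algebra.algebraMap_eq_smul_one, sub_smul]
      abel
    rw [heq, IsUnit.neg_iff]
  intro lam
  constructor
  · intro h
    exact (key lam).mp h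
  · intro h
    have h2 := (key (2 - lam)).mp h
    simpa using h2
end

section
/- Assume m = n and that the Cheeger constant α is strictly positive. Then the operator I − L₁, i.e. the transition operator P acting on ℓ¹(X,n) by (P f)(x) = (1/n(x)) ∑_{y∈X} b(x,y) f(y), is not a compact operator. -/
open MeasureTheory
open scoped ENNReal


open MeasureTheory
open scoped ENNReal

section MeasureAux

variable {X : Type*} [MeasurableSpace X] [MeasurableSingletonClass X] {n : X → ℝ}

lemma aux_mu_singleton (hn_nonneg : ∀ x, 0 ≤ n x) {μ : Measure X}
    (hμ : μ = Measure.sum fun x => ENNReal.ofReal (n x) • Measure.dirac x) (x : X) :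
    μ {x} = ENNReal.ofReal (n x) := by
  subst hμ
  rw [Measure.sum_apply _ (measurableSet_singleton x)]
  rw [tsum_eq_single x]
  · simp
  · intro y hy
    simp [Measure.smul_apply, Measure.dirac_apply' _ (measurableSet_singleton x),
      Set.indicator, hy]

lemma aux_ae_all (hn_pos : ∀ x, 0 < n x) {μ : Measure X}
    (hμ : μ = Measure.sum fun x => ENNReal.ofReal (n x) • Measure.dirac x)
    {p : X → Prop} (h : ∀ᵐ x ∂μ, p x) (x : X) : p x := by
  by_contra hx
  have h0 : μ {y | ¬ p y} = 0 := ae_iff.mp h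
  have h1 : μ {x} = 0 := measure_mono_null (by simpa using hx) h0
  rw [aux_mu_singleton (fun y => (hn_pos y).le) hμ] at h1
  exact absurd (ENNReal.ofReal_eq_zero.mp h1) (not_le.mpr (hn_pos x))

lemma aux_eLpNorm {μ : Measure X}
    (hμ : μ = Measure.sum fun x => ENNReal.ofReal (n x) • Measure.dirac x) (f : X → ℂ) :
    eLpNorm f 1 μ = ∑' x, ENNReal.ofReal (n x) * ‖f x‖₊ := by
  subst hμ
  rw [eLpNorm_one_eq_lintegral_enorm, lintegral_sum_measure]
  simp [lintegral_smul_measure, lintegral_dirac, enorm_eq_nnnorm]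

lemma aux_norm_summable (hn_nonneg : ∀ x, 0 ≤ n x) {μ : Measure X}
    (hμ : μ = Measure.sum fun x => ENNReal.ofReal (n x) • Measure.dirac x)
    (f : Lp ℂ 1 μ) :
    Summable (fun x => n x * ‖(f : X → ℂ) x‖) ∧
      ‖f‖ = ∑' x, n x * ‖(f : X → ℂ) x‖ := by
  have hne : eLpNorm (f : X → ℂ) 1 μ ≠ ⊤ := Lp.eLpNorm_ne_top f
  rw [aux_eLpNorm hμ] at hne
  have hterm : ∀ x, (ENNReal.ofReal (n x) * ‖(f : X → ℂ) x‖₊ : ℝ≥0∞) ≠ ⊤ := by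
    intro x; exact ENNReal.mul_ne_top ENNReal.ofReal_ne_top ENNReal.coe_ne_top
  have htoReal : ∀ x, ((ENNReal.ofReal (n x) * ‖(f : X → ℂ) x‖₊ : ℝ≥0∞)).toReal
      = n x * ‖(f : X → ℂ) x‖ := by
    intro x
    rw [ENNReal.toReal_mul, ENNReal.toReal_ofReal (hn_nonneg x)]
    simp
  constructor
  · have := ENNReal.summable_toReal hne
    simpa [htoReal] using this
  · rw [Lp.norm_def, aux_eLpNorm hμ, ENNReal.tsum_toReal_eq hterm]
    exact tsum_congr htoReal

end MeasureAux

section Core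

variable {X : Type*}

/-- Fubini for nonneg double sums against `b`. -/
lemma aux_fubini_b (b : X → X → ℝ) (hb_symm : ∀ x y, b x y = b y x)
    (hb_nonneg : ∀ x y, 0 ≤ b x y)
    (n : X → ℝ) (hn : ∀ x, HasSum (b x) (n x))
    (g : X → ℝ) (hg0 : ∀ x, 0 ≤ g x) (hgs : Summable fun x => n x * g x) :
    (Summable fun p : X × X => b p.1 p.2 * g p.2) ∧
      ∑' x, ∑' y, b x y * g y = ∑' y, n y * g y := by
  have hinner : ∀ y, ∑' x, b x y * g y = n y * g y := by
    intro y
    rw [show (fun x => b x y * g y) = fun x => b y x * g y from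
      funext fun x => by rw [hb_symm x y]]
    rw [tsum_mul_right, (hn y).tsum_eq]
  have hswap : Summable fun p : X × X => b p.2 p.1 * g p.1 := by
    rw [summable_prod_of_nonneg (fun p => mul_nonneg (hb_nonneg _ _) (hg0 _))]
    refine ⟨fun y => ?_, ?_⟩
    · exact ((hn y).summable.mul_right _).congr (fun x => by
        show b y x * g y = b x y * g y; rw [hb_symm y x])
    · exact hgs.congr (fun y => (hinner y).symm)
  have hpair : Summable fun p : X × X => b p.1 p.2 * g p.2 := by
    have h := ((Equiv.prodComm X X).summable_iff
      (f := fun p : X × X => b p.1 p.2 * g p.2)).mp ?_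
    · exact h
    · exact hswap.congr (fun p => rfl)
  refine ⟨hpair, ?_⟩
  have hcomm := Summable.tsum_comm (f := fun x y => b x y * g y) (hpair.congr (fun p => rfl))
  calc ∑' x, ∑' y, b x y * g y = ∑' y, ∑' x, b x y * g y := hcomm.symm
    _ = ∑' y, n y * g y := tsum_congr hinner

end Core

section Core2
variable {X : Type*}

lemma aux_core (b : X → X → ℝ) (hb_symm : ∀ x y, b x y = b y x)
    (hb_nonneg : ∀ x y, 0 ≤ b x y)
    (n : X → ℝ) (hn : ∀ x, HasSum (b x) (n x)) (hn_pos : ∀ x, 0 < n x)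
    (α : ℝ) (hα_pos : 0 < α)
    (hcheeger : ∀ W : Finset X, α * (∑ x ∈ W, n x) ≤
      ∑ x ∈ W, ∑' y : {y : X // y ∉ W}, b x y)
    (H : X → ℝ) (hH0 : ∀ x, 0 ≤ H x) (hHs : Summable fun x => n x * H x)
    (harm : ∀ x, n x * H x = ∑' y, b x y * H y)
    (x₀ : X) (hx₀ : 0 < H x₀) : False := by
  have hbn : ∀ x y, b x y ≤ n y := fun x y => by
    rw [hb_symm x y]; exact le_hasSum (hn y) x (fun j _ => hb_nonneg y j)
  have hSbH : ∀ x, Summable fun y => b x y * H y := by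
    intro x
    refine Summable.of_nonneg_of_le (fun y => mul_nonneg (hb_nonneg x y) (hH0 y))
      (fun y => mul_le_mul_of_nonneg_right (hbn x y) (hH0 y)) hHs
  -- Step (a): superharmonicity of truncations gives local constancy
  have hkey : ∀ c : ℝ, 0 ≤ c → ∀ x, ∑' y, b x y * min (H y) c = n x * min (H x) c := by
    intro c hc
    set g : X → ℝ := fun y => min (H y) c with hg
    have hg0 : ∀ y, 0 ≤ g y := fun y => le_min (hH0 y) hc
    have hgH : ∀ y, g y ≤ H y := fun y => min_le_left _ _
    have hgc : ∀ y, g y ≤ c := fun y => min_le_right _ _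
    have hngs : Summable fun x => n x * g x :=
      Summable.of_nonneg_of_le (fun x => mul_nonneg (hn_pos x).le (hg0 x))
        (fun x => mul_le_mul_of_nonneg_left (hgH x) (hn_pos x).le) hHs
    have hbg_le : ∀ x y, b x y * g y ≤ b x y * H y := fun x y =>
      mul_le_mul_of_nonneg_left (hgH y) (hb_nonneg x y)
    have hSbg : ∀ x, Summable fun y => b x y * g y := fun x =>
      Summable.of_nonneg_of_le (fun y => mul_nonneg (hb_nonneg x y) (hg0 y))
        (fun y => hbg_le x y) (hSbH x)
    set s : X → ℝ := fun x => ∑' y, b x y * g y with hs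
    have hs_nonneg : ∀ x, 0 ≤ s x := fun x =>
      tsum_nonneg (fun y => mul_nonneg (hb_nonneg x y) (hg0 y))
    have hs_le1 : ∀ x, s x ≤ n x * H x := by
      intro x
      rw [harm x]
      exact Summable.tsum_le_tsum (fun y => hbg_le x y) (hSbg x) (hSbH x)
    have hs_le2 : ∀ x, s x ≤ n x * c := by
      intro x
      have h1 : ∑' y, b x y * c = n x * c := by rw [tsum_mul_right, (hn x).tsum_eq]
      rw [← h1]
      exact Summable.tsum_le_tsum (fun y => mul_le_mul_of_nonneg_left (hgc y) (hb_nonneg x y))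
        (hSbg x) ((hn x).summable.mul_right c)
    have hs_le : ∀ x, s x ≤ n x * g x := by
      intro x
      have : n x * g x = min (n x * H x) (n x * c) := by
        rw [hg]; exact (mul_min_of_nonneg _ _ (hn_pos x).le)
      rw [this]
      exact le_min (hs_le1 x) (hs_le2 x)
    have hSs : Summable s :=
      Summable.of_nonneg_of_le hs_nonneg hs_le1 hHs
    have hfub := aux_fubini_b b hb_symm hb_nonneg n hn g hg0 hngs
    have htsum_s : ∑' x, s x = ∑' x, n x * g x := by
      rw [hs]; rw [hfub.2]
    have hu : ∀ x, n x * g x - s x = 0 := by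
      intro x
      have husum : Summable fun x => n x * g x - s x := hngs.sub hSs
      have htot : ∑' x, (n x * g x - s x) = 0 := by
        rw [Summable.tsum_sub hngs hSs, htsum_s, sub_self]
      have hle := Summable.le_tsum husum x (fun j _ => sub_nonneg.mpr (hs_le j))
      have := sub_nonneg.mpr (hs_le x)
      linarith [hle, htot ▸ hle]
    intro x
    have := hu x
    linarith [this]
  -- local constancy
  have hconst : ∀ x y, 0 < b x y → H x = H y := by
    have hlt : ∀ x y, 0 < b x y → ¬ H x < H y := by
      intro x y hbxy hxy
      set c : ℝ := (H x + H y) / 2 with hc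
      have hc0 : 0 ≤ c := div_nonneg (add_nonneg (hH0 x) (hH0 y)) (by norm_num)
      have hxc : H x < c := by rw [hc]; linarith
      have hyc : c < H y := by rw [hc]; linarith
      have hmin : ∀ z, b x z * min (H z) c ≤ b x z * H z := fun z =>
        mul_le_mul_of_nonneg_left (min_le_left _ _) (hb_nonneg x z)
      have hSbg : Summable fun z => b x z * min (H z) c :=
        Summable.of_nonneg_of_le
          (fun z => mul_nonneg (hb_nonneg x z) (le_min (hH0 z) hc0)) hmin (hSbH x)
      have hkx := hkey c hc0 x
      have hminx : min (H x) c = H x := min_eq_left hxc.le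
      have heq : ∑' z, b x z * min (H z) c = ∑' z, b x z * H z := by
        rw [hkx, hminx, harm x]
      have hdiff : ∑' z, (b x z * H z - b x z * min (H z) c) = 0 := by
        rw [Summable.tsum_sub (hSbH x) hSbg, heq, sub_self]
      have hterm := Summable.le_tsum (f := fun z => b x z * H z - b x z * min (H z) c)
        ((hSbH x).sub hSbg) y (fun j _ => sub_nonneg.mpr (hmin j))
      rw [hdiff] at hterm
      have hterm' : b x y * H y - b x y * (min (H y) c) ≤ 0 := hterm
      have hminy : min (H y) c = c := min_eq_right hyc.le
      rw [hminy] at hterm'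
      nlinarith [hterm', hbxy, hyc]
    intro x y hbxy
    have h1 := hlt x y hbxy
    have h2 := hlt y x (by rw [hb_symm y x]; exact hbxy)
    exact le_antisymm (not_lt.mp h2) (not_lt.mp h1)
  -- Step (b): the set C is "closed" and has finite measure
  classical
  set C : Set X := {z | H x₀ ≤ H z} with hC
  have hclosed : ∀ x, x ∈ C → ∀ y, y ∉ C → b x y = 0 := by
    intro x hx y hy
    by_contra hb0
    have hbpos : 0 < b x y := (hb_nonneg x y).lt_of_ne (Ne.symm hb0)
    exact hy (le_trans hx (hconst x y hbpos).le)
  set I : X → ℝ := C.indicator n with hI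
  have hI0 : ∀ x, 0 ≤ I x := Set.indicator_nonneg (fun y _ => (hn_pos y).le)
  have hI_le : ∀ x, I x ≤ (H x₀)⁻¹ * (n x * H x) := by
    intro x
    rw [hI, Set.indicator]
    split_ifs with h
    · rw [inv_mul_eq_div, le_div_iff₀ hx₀]
      have : n x * H x₀ ≤ n x * H x := mul_le_mul_of_nonneg_left h (hn_pos x).le
      linarith
    · exact mul_nonneg (inv_nonneg.mpr hx₀.le) (mul_nonneg (hn_pos x).le (hH0 x))
  have hIs : Summable I := Summable.of_nonneg_of_le hI0 hI_le (hHs.mul_left _)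
  set T : ℝ := ∑' x, I x with hT
  have hmemx₀ : x₀ ∈ C := by rw [hC]; exact Set.mem_setOf_eq ▸ le_rfl
  have hT_pos : 0 < T := by
    have hx0 : I x₀ = n x₀ := by rw [hI]; exact Set.indicator_of_mem hmemx₀ n
    have := Summable.le_tsum hIs x₀ (fun j _ => hI0 j)
    rw [hx0] at this
    exact lt_of_lt_of_le (hn_pos x₀) this
  -- Step (c): Cheeger contradiction
  have hWkey : ∀ W : Finset X, (↑W : Set X) ⊆ C → (1 + α) * (∑ x ∈ W, I x) ≤ T := by
    intro W hWC
    have hnI : ∀ x ∈ W, I x = n x := fun x hx => by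
      rw [hI]; exact Set.indicator_of_mem (hWC hx) n
    have hsum_eq : ∑ x ∈ W, I x = ∑ x ∈ W, n x := Finset.sum_congr rfl hnI
    have hsummInner : ∀ x ∈ W, Summable fun y : {y : X // y ∉ W} => b x ↑y :=
      fun x _ => ((hn x).summable).subtype {y : X | y ∉ W}
    have hbd : ∑ x ∈ W, ∑' (y : {y : X // y ∉ W}), b x ↑y
        ≤ ∑' (y : {y : X // y ∉ W}), I ↑y := by
      rw [← Summable.tsum_finsetSum hsummInner]
      refine Summable.tsum_le_tsum ?_ (summable_sum hsummInner) (hIs.subtype {y : X | y ∉ W})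
      intro y
      by_cases hyC : (y : X) ∈ C
      · have h1 : ∑ x ∈ W, b x ↑y = ∑ x ∈ W, b (↑y : X) x :=
          Finset.sum_congr rfl (fun x _ => hb_symm x ↑y)
        have h2 : ∑ x ∈ W, b (↑y : X) x ≤ n ↑y :=
          sum_le_hasSum W (fun i _ => hb_nonneg _ i) (hn ↑y)
        rw [h1, hI, Set.indicator_of_mem hyC]
        exact h2
      · have h3 : ∀ x ∈ W, b x ↑y = 0 := fun x hx => hclosed x (hWC hx) ↑y hyC
        rw [Finset.sum_eq_zero h3, hI, Set.indicator_of_notMem hyC]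
    have hcompl : ∑' (y : {y : X // y ∉ W}), I ↑y = T - ∑ x ∈ W, I x := by
      have h := Summable.sum_add_tsum_compl (s := W) hIs
      have hsets : ((↑W : Set X)ᶜ) = {y : X | y ∉ W} := by ext z; simp
      have h2 : ∑' (y : ↥((↑W : Set X)ᶜ)), I ↑y = ∑' (y : {y : X // y ∉ W}), I ↑y := by
        calc ∑' (y : ↥((↑W : Set X)ᶜ)), I ↑y
            = ∑' x, ((↑W : Set X)ᶜ).indicator I x := tsum_subtype _ I
          _ = ∑' x, ({y : X | y ∉ W}).indicator I x := by rw [hsets]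
          _ = ∑' (y : {y : X // y ∉ W}), I ↑y := (tsum_subtype {y : X | y ∉ W} I).symm
      rw [h2] at h
      linarith
    have h1 := hcheeger W
    rw [← hsum_eq] at h1
    rw [hcompl] at hbd
    linarith
  obtain ⟨W₀, hW₀⟩ : ∃ W : Finset X, T / (1 + α) < ∑ x ∈ W, I x := by
    by_contra hno
    push_neg at hno
    have h1 : T ≤ T / (1 + α) := Summable.tsum_le_of_sum_le hIs hno
    have h2 : T / (1 + α) < T := by
      rw [div_lt_iff₀ (by linarith)]
      nlinarith
    linarith
  set W : Finset X := W₀.filter (fun x => x ∈ C) with hWdef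
  have hWC : (↑W : Set X) ⊆ C := by
    intro x hx
    simp only [hWdef, Finset.coe_filter, Set.mem_setOf_eq] at hx
    exact hx.2
  have hsumW : ∑ x ∈ W, I x = ∑ x ∈ W₀, I x := by
    refine Finset.sum_subset (Finset.filter_subset _ _) ?_
    intro x hx hnx
    have hxC : x ∉ C := fun h => hnx (Finset.mem_filter.mpr ⟨hx, h⟩)
    rw [hI]; exact Set.indicator_of_notMem hxC n
  have hfinal := hWkey W hWC
  rw [hsumW] at hfinal
  have : (1 + α) * (T / (1 + α)) < (1 + α) * ∑ x ∈ W₀, I x :=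
    mul_lt_mul_of_pos_left hW₀ (by linarith)
  rw [mul_div_cancel₀ T (by linarith : (1 : ℝ) + α ≠ 0)] at this
  linarith

end Core2

set_option maxHeartbeats 1000000 in
/-- Assume `m = n` and that the Cheeger constant `α` is strictly positive,
where `α` is the maximal `β ≥ 0` with `β n(W) ≤ |∂W|` for all finite `W ⊆ X`. Then the
operator `I - L₁`, i.e. the transition operator `(P f)(x) = (1/n(x)) ∑_y b(x,y) f(y)` acting
on `ℓ¹(X,n)`, is not a compact operator. Here `ℓ¹(X,n)` is realized as `Lp ℂ 1 μ` for the
weighted counting measure `μ = ∑_x n(x) δ_x`. -/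
theorem stmt19 {X : Type*} [Countable X] [MeasurableSpace X] [MeasurableSingletonClass X]
    (b : X → X → ℝ)
    (hb_symm : ∀ x y, b x y = b y x)
    (hb_diag : ∀ x, b x x = 0)
    (hb_nonneg : ∀ x y, 0 ≤ b x y)
    (n : X → ℝ) (hn : ∀ x, HasSum (b x) (n x)) (hn_pos : ∀ x, 0 < n x)
    (α : ℝ) (hα_pos : 0 < α)
    (hα : IsGreatest {β : ℝ | 0 ≤ β ∧ ∀ W : Finset X,
      β * (∑ x ∈ W, n x) ≤ ∑ x ∈ W, ∑' y : {y : X // y ∉ W}, b x y} α)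
    (μ : Measure X)
    (hμ : μ = Measure.sum fun x => ENNReal.ofReal (n x) • Measure.dirac x)
    (P : Lp ℂ 1 μ →L[ℂ] Lp ℂ 1 μ)
    (hP : ∀ f : Lp ℂ 1 μ, ∀ᵐ x ∂μ,
      (P f : X → ℂ) x = (n x : ℂ)⁻¹ * ∑' y : X, (b x y : ℂ) * (f : X → ℂ) y) :
    ¬ IsCompactOperator P := by
  intro hcomp
  -- X cannot be empty
  rcases isEmpty_or_nonempty X with hemp | hne
  · have hmem : (α + 1) ∈ {β : ℝ | 0 ≤ β ∧ ∀ W : Finset X,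
        β * (∑ x ∈ W, n x) ≤ ∑ x ∈ W, ∑' y : {y : X // y ∉ W}, b x y} := by
      refine ⟨by linarith, fun W => ?_⟩
      have hW : W = ∅ := Finset.eq_empty_of_isEmpty W
      subst hW
      simp
    have := hα.2 hmem
    linarith
  obtain ⟨x₀⟩ := hne
  classical
  have hn_nonneg : ∀ x, 0 ≤ n x := fun x => (hn_pos x).le
  -- basic bridges
  have hae : ∀ {p : X → Prop}, (∀ᵐ x ∂μ, p x) → ∀ x, p x :=
    fun h x => aux_ae_all hn_pos hμ h x
  have hnormsum : ∀ f : Lp ℂ 1 μ, Summable (fun x => n x * ‖(f : X → ℂ) x‖) :=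
    fun f => (aux_norm_summable hn_nonneg hμ f).1
  have hnorm : ∀ f : Lp ℂ 1 μ, ‖f‖ = ∑' x, n x * ‖(f : X → ℂ) x‖ :=
    fun f => (aux_norm_summable hn_nonneg hμ f).2
  have heval : ∀ (f : Lp ℂ 1 μ) (x : X), n x * ‖(f : X → ℂ) x‖ ≤ ‖f‖ := by
    intro f x
    rw [hnorm f]
    exact Summable.le_tsum (hnormsum f) x (fun j _ => mul_nonneg (hn_nonneg j) (norm_nonneg _))
  have hcoe_sub : ∀ (f g : Lp ℂ 1 μ) (x : X),
      ((f - g : Lp ℂ 1 μ) : X → ℂ) x = (f : X → ℂ) x - (g : X → ℂ) x := by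
    intro f g
    exact hae ((Lp.coeFn_sub f g).mono (fun x hx => by simpa using hx))
  have hcoe_smul : ∀ (c : ℂ) (f : Lp ℂ 1 μ) (x : X),
      ((c • f : Lp ℂ 1 μ) : X → ℂ) x = c * (f : X → ℂ) x := by
    intro c f
    exact hae ((Lp.coeFn_smul c f).mono (fun x hx => by simpa using hx))
  have hcoe_add : ∀ (f g : Lp ℂ 1 μ) (x : X),
      ((f + g : Lp ℂ 1 μ) : X → ℂ) x = (f : X → ℂ) x + (g : X → ℂ) x := by
    intro f g
    exact hae ((Lp.coeFn_add f g).mono (fun x hx => by simpa using hx))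
  have hcoe_sum : ∀ (s : Finset ℕ) (F : ℕ → Lp ℂ 1 μ) (x : X),
      ((∑ m ∈ s, F m : Lp ℂ 1 μ) : X → ℂ) x = ∑ m ∈ s, (F m : X → ℂ) x := by
    intro s F
    induction s using Finset.induction_on with
    | empty =>
      intro x
      rw [Finset.sum_empty, Finset.sum_empty]
      exact hae ((Lp.coeFn_zero ℂ 1 μ).mono (fun x hx => by simpa using hx)) x
    | insert _ _ hnotmem ih =>
      intro x
      rw [Finset.sum_insert hnotmem, Finset.sum_insert hnotmem, hcoe_add, ih x]
  -- summability facts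
  have hbn : ∀ x y, b x y ≤ n y := fun x y => by
    rw [hb_symm x y]; exact le_hasSum (hn y) x (fun j _ => hb_nonneg y j)
  have hS2 : ∀ (f : Lp ℂ 1 μ) (x : X), Summable fun y => (b x y : ℂ) * (f : X → ℂ) y := by
    intro f x
    apply Summable.of_norm
    have : ∀ y, ‖(b x y : ℂ) * (f : X → ℂ) y‖ = b x y * ‖(f : X → ℂ) y‖ := by
      intro y
      rw [norm_mul, Complex.norm_real, Real.norm_eq_abs, abs_of_nonneg (hb_nonneg x y)]
    rw [show (fun y => ‖(b x y : ℂ) * (f : X → ℂ) y‖)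
      = fun y => b x y * ‖(f : X → ℂ) y‖ from funext this]
    exact Summable.of_nonneg_of_le
      (fun y => mul_nonneg (hb_nonneg x y) (norm_nonneg _))
      (fun y => mul_le_mul_of_nonneg_right (hbn x y) (norm_nonneg _)) (hnormsum f)
  have hPf : ∀ (f : Lp ℂ 1 μ) (x : X),
      ((P f : Lp ℂ 1 μ) : X → ℂ) x = (n x : ℂ)⁻¹ * ∑' y, (b x y : ℂ) * (f : X → ℂ) y :=
    fun f => hae (hP f)
  -- positivity machinery
  have hfr : ∀ (f : Lp ℂ 1 μ), (∀ x, ((f : X → ℂ) x).im = 0) →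
      ∀ y, (f : X → ℂ) y = ((((f : X → ℂ) y).re : ℝ) : ℂ) := by
    intro f hf y
    exact Complex.ext (by simp) (by simp [hf y])
  have hNNP : ∀ f : Lp ℂ 1 μ, (∀ x, (((f : X → ℂ)) x).im = 0 ∧ 0 ≤ ((f : X → ℂ) x).re) →
      ∀ x, (((P f : Lp ℂ 1 μ) : X → ℂ) x).im = 0 ∧ 0 ≤ (((P f : Lp ℂ 1 μ) : X → ℂ) x).re := by
    intro f hf x
    have hSr : Summable fun y => b x y * ((f : X → ℂ) y).re :=
      Summable.of_nonneg_of_le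
        (fun y => mul_nonneg (hb_nonneg x y) (hf y).2)
        (fun y => by
          have h1 : ((f : X → ℂ) y).re ≤ ‖(f : X → ℂ) y‖ := Complex.re_le_norm _
          exact mul_le_mul (hbn x y) h1 (hf y).2 (hn_nonneg y))
        (hnormsum f)
    have htsum : ∑' y, (b x y : ℂ) * (f : X → ℂ) y
        = (((∑' y, b x y * ((f : X → ℂ) y).re : ℝ)) : ℂ) := by
      rw [Complex.ofReal_tsum]
      refine tsum_congr fun y => ?_
      rw [hfr f (fun z => (hf z).1) y]
      push_cast
      simp
    have hval : ((P f : Lp ℂ 1 μ) : X → ℂ) x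
        = ((((n x)⁻¹ * ∑' y, b x y * ((f : X → ℂ) y).re : ℝ)) : ℂ) := by
      rw [hPf f x, htsum]
      push_cast
      ring
    rw [hval]
    refine ⟨by simp, ?_⟩
    simp only [Complex.ofReal_re]
    exact mul_nonneg (inv_nonneg.mpr (hn_nonneg x))
      (tsum_nonneg (fun y => mul_nonneg (hb_nonneg x y) (hf y).2))
  -- the mass functional
  have hφsum : ∀ f : Lp ℂ 1 μ, Summable fun x => (n x : ℂ) * (f : X → ℂ) x := by
    intro f
    apply Summable.of_norm
    have : ∀ x, ‖(n x : ℂ) * (f : X → ℂ) x‖ = n x * ‖(f : X → ℂ) x‖ := by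
      intro x
      rw [norm_mul, Complex.norm_real, Real.norm_eq_abs, abs_of_nonneg (hn_nonneg x)]
    rw [show (fun x => ‖(n x : ℂ) * (f : X → ℂ) x‖)
      = fun x => n x * ‖(f : X → ℂ) x‖ from funext this]
    exact hnormsum f
  have hφlip : ∀ f g : Lp ℂ 1 μ,
      ‖(∑' x, (n x : ℂ) * (f : X → ℂ) x) - ∑' x, (n x : ℂ) * (g : X → ℂ) x‖ ≤ ‖f - g‖ := by
    intro f g
    have hsub : (∑' x, (n x : ℂ) * (f : X → ℂ) x) - ∑' x, (n x : ℂ) * (g : X → ℂ) x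
        = ∑' x, (n x : ℂ) * ((f - g : Lp ℂ 1 μ) : X → ℂ) x := by
      rw [← Summable.tsum_sub (hφsum f) (hφsum g)]
      exact tsum_congr fun x => by rw [hcoe_sub f g x]; ring
    rw [hsub, hnorm (f - g)]
    refine (norm_tsum_le_tsum_norm ?_).trans ?_
    · have := hnormsum (f - g)
      apply this.congr
      intro x
      rw [norm_mul, Complex.norm_real, Real.norm_eq_abs, abs_of_nonneg (hn_nonneg x)]
    · refine le_of_eq (tsum_congr fun x => ?_)
      rw [norm_mul, Complex.norm_real, Real.norm_eq_abs, abs_of_nonneg (hn_nonneg x)]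
  -- norm of nonneg functions equals mass
  have hnorm_NN : ∀ f : Lp ℂ 1 μ,
      (∀ x, (((f : X → ℂ)) x).im = 0 ∧ 0 ≤ ((f : X → ℂ) x).re) →
      ‖f‖ = (∑' x, (n x : ℂ) * (f : X → ℂ) x).re := by
    intro f hf
    have hre : (∑' x, (n x : ℂ) * (f : X → ℂ) x).re
        = ∑' x, ((n x : ℂ) * (f : X → ℂ) x).re := by
      exact (Complex.reCLM.map_tsum (hφsum f))
    rw [hnorm f, hre]
    refine tsum_congr fun x => ?_
    have h1 : ‖(f : X → ℂ) x‖ = ((f : X → ℂ) x).re := by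
      rw [hfr f (fun z => (hf z).1) x]
      simp [abs_of_nonneg (hf x).2]
    rw [h1, Complex.mul_re]
    simp [(hf x).1]
  -- mass is preserved by P
  have hφP : ∀ f : Lp ℂ 1 μ,
      ∑' x, (n x : ℂ) * ((P f : Lp ℂ 1 μ) : X → ℂ) x = ∑' x, (n x : ℂ) * (f : X → ℂ) x := by
    intro f
    have hfub := aux_fubini_b b hb_symm hb_nonneg n hn (fun y => ‖(f : X → ℂ) y‖)
      (fun y => norm_nonneg _) (hnormsum f)
    have hpair : Summable fun p : X × X => (b p.1 p.2 : ℂ) * (f : X → ℂ) p.2 := by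
      apply Summable.of_norm
      apply hfub.1.congr
      intro p
      rw [norm_mul, Complex.norm_real, Real.norm_eq_abs, abs_of_nonneg (hb_nonneg p.1 p.2)]
    have step1 : ∑' x, (n x : ℂ) * ((P f : Lp ℂ 1 μ) : X → ℂ) x
        = ∑' x, ∑' y, (b x y : ℂ) * (f : X → ℂ) y := by
      refine tsum_congr fun x => ?_
      rw [hPf f x, mul_inv_cancel_left₀ (Complex.ofReal_ne_zero.mpr (hn_pos x).ne')]
    have step2 : ∑' x, ∑' y, (b x y : ℂ) * (f : X → ℂ) y
        = ∑' y, ∑' x, (b x y : ℂ) * (f : X → ℂ) y :=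
      (Summable.tsum_comm (f := fun x y => (b x y : ℂ) * (f : X → ℂ) y) hpair).symm
    have step3 : ∑' y, ∑' x, (b x y : ℂ) * (f : X → ℂ) y
        = ∑' y, (n y : ℂ) * (f : X → ℂ) y := by
      refine tsum_congr fun y => ?_
      rw [tsum_mul_right]
      congr 1
      have h1 : ∑' x, ((b x y : ℝ) : ℂ) = ∑' x, ((b y x : ℝ) : ℂ) :=
        tsum_congr fun x => by rw [hb_symm x y]
      rw [h1, ← Complex.ofReal_tsum, (hn y).tsum_eq]
    rw [step1, step2, step3]
  -- the initial unit-mass nonneg element e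
  have hμx₀ : μ {x₀} ≠ ⊤ := by
    rw [aux_mu_singleton hn_nonneg hμ]
    exact ENNReal.ofReal_ne_top
  set e : Lp ℂ 1 μ :=
    indicatorConstLp 1 (measurableSet_singleton x₀) hμx₀ ((n x₀ : ℂ)⁻¹) with he
  have hcoe_e : ∀ x, (e : X → ℂ) x
      = Set.indicator {x₀} (fun _ => (n x₀ : ℂ)⁻¹) x := by
    exact hae indicatorConstLp_coeFn
  have hNN_e : ∀ x, ((e : X → ℂ) x).im = 0 ∧ 0 ≤ ((e : X → ℂ) x).re := by
    intro x
    rw [hcoe_e x, Set.indicator]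
    split_ifs with h
    · constructor
      · rw [show ((n x₀ : ℂ))⁻¹ = ((((n x₀)⁻¹ : ℝ)) : ℂ) by push_cast; ring]
        simp
      · rw [show ((n x₀ : ℂ))⁻¹ = ((((n x₀)⁻¹ : ℝ)) : ℂ) by push_cast; ring]
        simp [inv_nonneg.mpr (hn_nonneg x₀)]
    · simp
  have hφ_e : ∑' x, (n x : ℂ) * (e : X → ℂ) x = 1 := by
    rw [tsum_eq_single x₀ ?_]
    · rw [hcoe_e x₀, Set.indicator_of_mem (Set.mem_singleton x₀)]
      exact mul_inv_cancel₀ (Complex.ofReal_ne_zero.mpr (hn_pos x₀).ne')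
    · intro x hx
      rw [hcoe_e x, Set.indicator_of_notMem (by simpa using hx)]
      simp
  -- iterates of P
  set g : ℕ → Lp ℂ 1 μ := fun m => (fun f => P f)^[m] e with hg
  have hg0 : g 0 = e := rfl
  have hgsucc : ∀ m, g (m + 1) = P (g m) := by
    intro m
    rw [hg]
    exact Function.iterate_succ_apply' _ _ _
  have hgNN : ∀ m, (∀ x, (((g m : Lp ℂ 1 μ) : X → ℂ) x).im = 0
      ∧ 0 ≤ (((g m : Lp ℂ 1 μ) : X → ℂ) x).re)
      ∧ ∑' x, (n x : ℂ) * ((g m : Lp ℂ 1 μ) : X → ℂ) x = 1 := by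
    intro m
    induction m with
    | zero => exact ⟨hNN_e, hφ_e⟩
    | succ m ih =>
      rw [hgsucc m]
      exact ⟨hNNP (g m) ih.1, by rw [hφP (g m)]; exact ih.2⟩
  have hgnorm : ∀ m, ‖g m‖ = 1 := by
    intro m
    rw [hnorm_NN (g m) (hgNN m).1, (hgNN m).2]
    simp
  -- the Cesàro averages
  set A : ℕ → Lp ℂ 1 μ := fun N =>
    (((N + 1 : ℕ) : ℂ))⁻¹ • ∑ m ∈ Finset.range (N + 1), g m with hA
  have hcoeA : ∀ N x, ((A N : Lp ℂ 1 μ) : X → ℂ) x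
      = (((N + 1 : ℕ) : ℂ))⁻¹ * ∑ m ∈ Finset.range (N + 1), ((g m : Lp ℂ 1 μ) : X → ℂ) x := by
    intro N x
    rw [hA]
    rw [hcoe_smul _ _ x, hcoe_sum _ _ x]
  have hANN : ∀ N, ∀ x, (((A N : Lp ℂ 1 μ) : X → ℂ) x).im = 0
      ∧ 0 ≤ (((A N : Lp ℂ 1 μ) : X → ℂ) x).re := by
    intro N x
    have hval : ((A N : Lp ℂ 1 μ) : X → ℂ) x
        = (((((N + 1 : ℕ) : ℝ))⁻¹
            * ∑ m ∈ Finset.range (N + 1), (((g m : Lp ℂ 1 μ) : X → ℂ) x).re : ℝ) : ℂ) := by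
      rw [hcoeA N x]
      rw [show ∑ m ∈ Finset.range (N + 1), ((g m : Lp ℂ 1 μ) : X → ℂ) x
          = ∑ m ∈ Finset.range (N + 1), (((((g m : Lp ℂ 1 μ) : X → ℂ) x).re : ℝ) : ℂ) from
        Finset.sum_congr rfl (fun m _ => hfr (g m) (fun z => ((hgNN m).1 z).1) x)]
      push_cast
      ring
    rw [hval]
    constructor
    · simp
    · simp only [Complex.ofReal_re]
      refine mul_nonneg (by positivity) (Finset.sum_nonneg (fun m _ => ((hgNN m).1 x).2))
  have hφA : ∀ N, ∑' x, (n x : ℂ) * ((A N : Lp ℂ 1 μ) : X → ℂ) x = 1 := by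
    intro N
    have h1 : ∀ x, (n x : ℂ) * ((A N : Lp ℂ 1 μ) : X → ℂ) x
        = (((N + 1 : ℕ) : ℂ))⁻¹
          * ∑ m ∈ Finset.range (N + 1), (n x : ℂ) * ((g m : Lp ℂ 1 μ) : X → ℂ) x := by
      intro x
      calc (n x : ℂ) * ((A N : Lp ℂ 1 μ) : X → ℂ) x
          = (((N + 1 : ℕ) : ℂ))⁻¹ * ((n x : ℂ)
            * ∑ m ∈ Finset.range (N + 1), ((g m : Lp ℂ 1 μ) : X → ℂ) x) := by
            rw [hcoeA N x]; ring
        _ = _ := by rw [Finset.mul_sum]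
    rw [tsum_congr h1, tsum_mul_left,
      Summable.tsum_finsetSum (fun m _ => hφsum (g m))]
    rw [Finset.sum_congr rfl (fun m _ => (hgNN m).2)]
    rw [Finset.sum_const, Finset.card_range, nsmul_eq_mul, mul_one]
    rw [inv_mul_cancel₀ (Nat.cast_ne_zero.mpr (Nat.succ_ne_zero N) : ((N + 1 : ℕ) : ℂ) ≠ 0)]
  have hnormA : ∀ N, ‖A N‖ = 1 := by
    intro N
    rw [hnorm_NN (A N) (hANN N), hφA N]
    simp
  have hPA : ∀ N, ‖P (A N) - A N‖ ≤ 2 / ((N : ℝ) + 1) := by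
    intro N
    have h1 : P (A N) - A N
        = (((N + 1 : ℕ) : ℂ))⁻¹ • (g (N + 1) - g 0) := by
      simp only [hA]
      rw [ContinuousLinearMap.map_smul, map_sum]
      rw [← smul_sub]
      congr 1
      rw [show ∑ m ∈ Finset.range (N + 1), P (g m)
          = ∑ m ∈ Finset.range (N + 1), g (m + 1) from
        Finset.sum_congr rfl (fun m _ => (hgsucc m).symm)]
      rw [← Finset.sum_sub_distrib]
      exact Finset.sum_range_sub g (N + 1)
    rw [h1, norm_smul]
    have h2 : ‖(((N + 1 : ℕ) : ℂ))⁻¹‖ = ((N : ℝ) + 1)⁻¹ := by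
      rw [norm_inv, Complex.norm_natCast]
      push_cast
      ring
    rw [h2]
    have h3 : ‖g (N + 1) - g 0‖ ≤ 2 := by
      refine (norm_sub_le _ _).trans ?_
      rw [hgnorm (N + 1), hgnorm 0]
      norm_num
    rw [div_eq_inv_mul]
    have h4 : (0:ℝ) ≤ ((N : ℝ) + 1)⁻¹ := by positivity
    exact mul_le_mul_of_nonneg_left h3 h4
  -- extract a convergent subsequence from compactness
  obtain ⟨K, hK, hKnhds⟩ := hcomp
  rw [Metric.mem_nhds_iff] at hKnhds
  obtain ⟨ε, hε, hball⟩ := hKnhds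
  have hc_ne : (((ε / 2 : ℝ)) : ℂ) ≠ 0 :=
    Complex.ofReal_ne_zero.mpr (by positivity)
  have hmemK : ∀ N, P ((((ε / 2 : ℝ)) : ℂ) • A N) ∈ K := by
    intro N
    apply hball
    rw [Metric.mem_ball, dist_zero_right, norm_smul, hnormA N, mul_one]
    rw [Complex.norm_real, Real.norm_eq_abs, abs_of_nonneg (by positivity : (0:ℝ) ≤ ε / 2)]
    linarith
  obtain ⟨y, -, ψ, hψ, htend⟩ := hK.isSeqCompact hmemK
  set h : Lp ℂ 1 μ := ((((ε / 2 : ℝ)) : ℂ))⁻¹ • y with hh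
  have hPA_tend : Filter.Tendsto (fun k => P (A (ψ k))) Filter.atTop (nhds h) := by
    have h1 := htend.const_smul (((((ε / 2 : ℝ)) : ℂ))⁻¹)
    refine h1.congr fun k => ?_
    show ((((ε / 2 : ℝ)) : ℂ))⁻¹ • P ((((ε / 2 : ℝ)) : ℂ) • A (ψ k)) = P (A (ψ k))
    rw [ContinuousLinearMap.map_smul, smul_smul, inv_mul_cancel₀ hc_ne, one_smul]
  have hB : ∀ k : ℕ, ‖P (A (ψ k)) - A (ψ k)‖ ≤ 2 / ((k : ℝ) + 1) := by
    intro k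
    refine (hPA (ψ k)).trans ?_
    refine div_le_div_of_nonneg_left (by norm_num) (by positivity) ?_
    have : (k : ℝ) ≤ (ψ k : ℝ) := by exact_mod_cast hψ.le_apply
    linarith
  have hB0 : Filter.Tendsto (fun k : ℕ => 2 / ((k : ℝ) + 1)) Filter.atTop (nhds 0) := by
    apply Filter.Tendsto.div_atTop (tendsto_const_nhds)
    exact Filter.tendsto_atTop_add_const_right _ 1 tendsto_natCast_atTop_atTop
  have hPAdiff : Filter.Tendsto (fun k => ‖P (A (ψ k)) - A (ψ k)‖) Filter.atTop (nhds 0) :=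
    squeeze_zero (fun k => norm_nonneg _) hB hB0
  have hA_tend : Filter.Tendsto (fun k => A (ψ k)) Filter.atTop (nhds h) := by
    rw [tendsto_iff_dist_tendsto_zero]
    have hbound : ∀ k, dist (A (ψ k)) h
        ≤ ‖P (A (ψ k)) - A (ψ k)‖ + dist (P (A (ψ k))) h := by
      intro k
      calc dist (A (ψ k)) h
          ≤ dist (A (ψ k)) (P (A (ψ k))) + dist (P (A (ψ k))) h := dist_triangle _ _ _
        _ = ‖P (A (ψ k)) - A (ψ k)‖ + dist (P (A (ψ k))) h := by
            rw [dist_eq_norm (A (ψ k)) (P (A (ψ k))), norm_sub_rev]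
    have hsum0 : Filter.Tendsto (fun k => ‖P (A (ψ k)) - A (ψ k)‖ + dist (P (A (ψ k))) h)
        Filter.atTop (nhds 0) := by
      have h2 := (tendsto_iff_dist_tendsto_zero).mp hPA_tend
      simpa using hPAdiff.add h2
    exact squeeze_zero (fun k => dist_nonneg) hbound hsum0
  have hfix : P h = h :=
    tendsto_nhds_unique ((P.continuous.tendsto h).comp hA_tend) hPA_tend
  -- pointwise convergence
  have hAnorm_tend : Filter.Tendsto (fun k => ‖A (ψ k) - h‖) Filter.atTop (nhds 0) := by
    have := (tendsto_iff_dist_tendsto_zero).mp hA_tend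
    refine this.congr fun k => ?_
    rw [dist_eq_norm]
  have hptw : ∀ x, Filter.Tendsto (fun k => ((A (ψ k) : Lp ℂ 1 μ) : X → ℂ) x)
      Filter.atTop (nhds ((h : X → ℂ) x)) := by
    intro x
    rw [tendsto_iff_dist_tendsto_zero]
    have hbound : ∀ k, dist (((A (ψ k) : Lp ℂ 1 μ) : X → ℂ) x) ((h : X → ℂ) x)
        ≤ (n x)⁻¹ * ‖A (ψ k) - h‖ := by
      intro k
      rw [dist_eq_norm, ← hcoe_sub (A (ψ k)) h x]
      rw [inv_mul_eq_div, le_div_iff₀ (hn_pos x), mul_comm]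
      exact heval (A (ψ k) - h) x
    have hmul : Filter.Tendsto (fun k => (n x)⁻¹ * ‖A (ψ k) - h‖) Filter.atTop (nhds 0) := by
      simpa using hAnorm_tend.const_mul ((n x)⁻¹)
    exact squeeze_zero (fun k => dist_nonneg) hbound hmul
  have hNNh : ∀ x, (((h : Lp ℂ 1 μ) : X → ℂ) x).im = 0 ∧ 0 ≤ (((h : Lp ℂ 1 μ) : X → ℂ) x).re := by
    intro x
    constructor
    · have him : Filter.Tendsto (fun k => (((A (ψ k) : Lp ℂ 1 μ) : X → ℂ) x).im)
          Filter.atTop (nhds (((h : X → ℂ) x).im)) :=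
        (Complex.continuous_im.tendsto _).comp (hptw x)
      have hconst : ∀ k, (((A (ψ k) : Lp ℂ 1 μ) : X → ℂ) x).im = 0 :=
        fun k => (hANN (ψ k) x).1
      rw [Filter.tendsto_congr hconst] at him
      exact tendsto_nhds_unique him tendsto_const_nhds
    · have hre : Filter.Tendsto (fun k => (((A (ψ k) : Lp ℂ 1 μ) : X → ℂ) x).re)
          Filter.atTop (nhds (((h : X → ℂ) x).re)) :=
        (Complex.continuous_re.tendsto _).comp (hptw x)
      exact ge_of_tendsto hre (Filter.Eventually.of_forall fun k => (hANN (ψ k) x).2)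
  -- mass of h is 1
  have hφh : ∑' x, (n x : ℂ) * ((h : Lp ℂ 1 μ) : X → ℂ) x = 1 := by
    have hφtend : Filter.Tendsto (fun k => ∑' x, (n x : ℂ) * ((A (ψ k) : Lp ℂ 1 μ) : X → ℂ) x)
        Filter.atTop (nhds (∑' x, (n x : ℂ) * ((h : Lp ℂ 1 μ) : X → ℂ) x)) := by
      rw [tendsto_iff_dist_tendsto_zero]
      refine squeeze_zero (fun k => dist_nonneg) (fun k => ?_) hAnorm_tend
      rw [dist_eq_norm]
      exact hφlip (A (ψ k)) h
    rw [Filter.tendsto_congr (fun k => hφA (ψ k))] at hφtend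
    exact tendsto_nhds_unique hφtend tendsto_const_nhds
  -- pass to the real function H
  set H : X → ℝ := fun x => (((h : Lp ℂ 1 μ) : X → ℂ) x).re with hH
  have hH0 : ∀ x, 0 ≤ H x := fun x => (hNNh x).2
  have hhofReal : ∀ x, ((h : Lp ℂ 1 μ) : X → ℂ) x = ((H x : ℝ) : ℂ) :=
    fun x => hfr h (fun z => (hNNh z).1) x
  have hHnorm : ∀ x, ‖((h : Lp ℂ 1 μ) : X → ℂ) x‖ = H x := by
    intro x
    rw [hhofReal x, Complex.norm_real, Real.norm_eq_abs, abs_of_nonneg (hH0 x)]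
  have hHs : Summable fun x => n x * H x :=
    (hnormsum h).congr (fun x => by rw [hHnorm x])
  have hmass : ∑' x, n x * H x = 1 := by
    have h1 : (∑' x, (n x : ℂ) * ((h : Lp ℂ 1 μ) : X → ℂ) x).re
        = ∑' x, ((n x : ℂ) * ((h : Lp ℂ 1 μ) : X → ℂ) x).re :=
      Complex.reCLM.map_tsum (hφsum h)
    have h2 : ∀ x, ((n x : ℂ) * ((h : Lp ℂ 1 μ) : X → ℂ) x).re = n x * H x := by
      intro x
      rw [Complex.mul_re]
      simp [(hNNh x).1, hH]
    rw [← tsum_congr h2, ← h1, hφh]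
    simp
  -- harmonicity of H
  have harm : ∀ x, n x * H x = ∑' y, b x y * H y := by
    intro x
    have hSrH : Summable fun y => b x y * H y :=
      Summable.of_nonneg_of_le (fun y => mul_nonneg (hb_nonneg x y) (hH0 y))
        (fun y => mul_le_mul_of_nonneg_right (hbn x y) (hH0 y)) hHs
    have htsum : ∑' y, (b x y : ℂ) * ((h : Lp ℂ 1 μ) : X → ℂ) y
        = (((∑' y, b x y * H y : ℝ)) : ℂ) := by
      rw [Complex.ofReal_tsum]
      refine tsum_congr fun y => ?_
      rw [hhofReal y]
      push_cast
      simp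
    have hcoe_fix : ((h : Lp ℂ 1 μ) : X → ℂ) x
        = ((P h : Lp ℂ 1 μ) : X → ℂ) x := by rw [hfix]
    have heq : ((H x : ℝ) : ℂ) = ((((n x)⁻¹ * ∑' y, b x y * H y : ℝ)) : ℂ) := by
      rw [← hhofReal x, hcoe_fix, hPf h x, htsum]
      push_cast
      ring
    have heq2 : H x = (n x)⁻¹ * ∑' y, b x y * H y := by
      exact_mod_cast heq
    rw [heq2, ← mul_assoc, mul_inv_cancel₀ (hn_pos x).ne', one_mul]
  -- some point with positive H
  have hx' : ∃ x', 0 < H x' := by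
    by_contra hno
    push_neg at hno
    have hzero : ∀ x, H x = 0 := fun x => le_antisymm (hno x) (hH0 x)
    rw [tsum_congr (fun x => by rw [hzero x, mul_zero] : ∀ x, n x * H x = 0)] at hmass
    simp at hmass
  obtain ⟨x', hx'⟩ := hx'
  exact aux_core b hb_symm hb_nonneg n hn hn_pos α hα_pos hα.1.2 H hH0 hHs harm x' hx'
end
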